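/- arXiv:1705.09428 — 6 statements merged into one kernel-verified Lean document; each statement's English description precedes it below -/
import Mathlib

section
/- A connected graph of order at least two in which every edge lies in some perfect matching (a matching covered graph) has no cut vertex. -/
open SimpleGraph

/-- A perfect matching of `G`, viewed as a set of edges: every edge of `M` is an
edge of `G`, and every vertex lies in exactly one edge of `M`. -/
def IsPM {V : Type*} (G : SimpleGraph V) (M : Set (Sym2 V)) : Prop :=
  M ⊆ G.edgeSet ∧ ∀ v : V, ∃! e, e ∈ M ∧ v ∈ e

/-- A matching covered graph: connected, of order at least two, in which every
edge lies in some perfect matching. -/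
def MatchingCovered {V : Type*} (G : SimpleGraph V) : Prop :=
  G.Connected ∧ 2 ≤ Nat.card V ∧ ∀ e ∈ G.edgeSet, ∃ M, IsPM G M ∧ e ∈ M

/-- The edge cut `∂(X)`: edges of `G` with exactly one end in `X`. -/
def edgeCut {V : Type*} (G : SimpleGraph V) (X : Set V) : Set (Sym2 V) :=
  {e | e ∈ G.edgeSet ∧ ∃ x y, e = s(x, y) ∧ x ∈ X ∧ y ∉ X}

/-- The number of odd components of `G - S`. -/
noncomputable def numOddComponents {V : Type*} (G : SimpleGraph V) (S : Set V) : ℕ :=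
  Nat.card {c : (G.induce (Sᶜ : Set V)).ConnectedComponent // Odd (Nat.card c.supp)}

/-- A barrier: a vertex set `B` such that `G - B` has exactly `|B|` odd components. -/
def IsBarrier {V : Type*} (G : SimpleGraph V) (B : Set V) : Prop :=
  numOddComponents G B = B.ncard

/-- The cut `∂(X)` is tight: every perfect matching meets it in exactly one edge. -/
def TightCut {V : Type*} (G : SimpleGraph V) (X : Set V) : Prop :=
  ∀ M, IsPM G M → (M ∩ edgeCut G X).ncard = 1

/-- The cut `∂(X)` is separating: every edge lies in a perfect matching meeting
the cut in exactly one edge. -/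
def SeparatingCut {V : Type*} (G : SimpleGraph V) (X : Set V) : Prop :=
  ∀ e ∈ G.edgeSet, ∃ M, IsPM G M ∧ e ∈ M ∧ (M ∩ edgeCut G X).ncard = 1

section Aux

variable {V : Type*} [Fintype V] {G : SimpleGraph V}

/-- From a perfect matching we extract a partner function. -/
lemma exists_pm_partner {M : Set (Sym2 V)} (hM : IsPM G M) :
    ∃ f : V → V, (∀ x, G.Adj x (f x)) ∧ (∀ x y, s(x, y) ∈ M → y = f x) ∧
      (∀ x, f (f x) = x) ∧ (∀ x, s(x, f x) ∈ M) := by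
  classical
  choose e he using fun x => (hM.2 x).exists
  refine ⟨fun x => Sym2.Mem.other (he x).2, fun x => ?_, fun x y h => ?_, fun x => ?_, fun x => ?_⟩
  · rw [← SimpleGraph.mem_edgeSet]
    apply hM.1
    rw [Sym2.other_spec (he x).2]
    exact (he x).1
  · have h1 : s(x, y) = e x := (hM.2 x).unique ⟨h, Sym2.mem_mk_left x y⟩ ⟨(he x).1, (he x).2⟩
    have h2 : s(x, y) = s(x, Sym2.Mem.other (he x).2) := by
      rw [h1, Sym2.other_spec (he x).2]
    exact (Sym2.congr_right.mp h2)
  · -- involution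
    set f : V → V := fun x => Sym2.Mem.other (he x).2 with hf
    have hmem : s(x, f x) ∈ M := by
      rw [hf]; simp only []
      rw [Sym2.other_spec (he x).2]; exact (he x).1
    have hswap : s(f x, x) ∈ M := by rwa [Sym2.eq_swap]
    have h1 : s(f x, x) = e (f x) :=
      (hM.2 (f x)).unique ⟨hswap, Sym2.mem_mk_left _ _⟩ ⟨(he (f x)).1, (he (f x)).2⟩
    have h2 : s(f x, x) = s(f x, Sym2.Mem.other (he (f x)).2) := by
      rw [h1, Sym2.other_spec (he (f x)).2]
    exact (Sym2.congr_right.mp h2).symm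
  · rw [Sym2.other_spec (he x).2]; exact (he x).1

/-- A finite set with a fixed-point-free involution has even cardinality. -/
lemma even_ncard_of_involution {S : Set V} (f : V → V)
    (hmem : ∀ x ∈ S, f x ∈ S) (hinv : ∀ x, f (f x) = x)
    (hne : ∀ x ∈ S, f x ≠ x) : Even S.ncard := by
  classical
  let g : Function.End S := fun x => ⟨f x, hmem x x.2⟩
  have hg : g ^ 2 ^ 1 = 1 := by
    have h21 : (2 : ℕ) ^ 1 = 2 := by norm_num
    rw [h21, pow_two]
    funext x
    exact Subtype.ext (hinv x)
  have h := Equiv.Perm.card_fixedPoints_modEq (p := 2) (n := 1) hg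
  have hempty : IsEmpty (Function.fixedPoints g) := by
    refine ⟨fun ⟨x, hxf⟩ => ?_⟩
    exact hne x x.2 (congrArg Subtype.val hxf)
  haveI := hempty
  rw [Fintype.card_eq_zero (α := Function.fixedPoints g)] at h
  have : 2 ∣ Fintype.card S := (Nat.modEq_zero_iff_dvd).mp h
  have hcard : S.ncard = Fintype.card S := by
    rw [← Nat.card_coe_set_eq, Nat.card_eq_fintype_card]
  rw [hcard]
  exact even_iff_two_dvd.mpr this

/-- Walking in `G` from `x` to `y ≠ v`: either we can walk avoiding `v`, or
some neighbor of `v` reaches `y` avoiding `v`. -/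
lemma reach_aux {v x y : V} (p : G.Walk x y) (hy : y ∈ ({v}ᶜ : Set V)) :
    (∃ hx : x ∈ ({v}ᶜ : Set V), (G.induce ({v}ᶜ : Set V)).Reachable ⟨x, hx⟩ ⟨y, hy⟩) ∨
    (∃ w, ∃ hw : w ∈ ({v}ᶜ : Set V), G.Adj v w ∧
      (G.induce ({v}ᶜ : Set V)).Reachable ⟨w, hw⟩ ⟨y, hy⟩) := by
  induction p with
  | nil => exact Or.inl ⟨hy, Reachable.refl _⟩
  | @cons a b c h p ih =>
    rcases ih hy with ⟨hb, hr⟩ | ⟨w, hw, hadj, hr⟩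
    · by_cases ha : a = v
      · subst ha
        exact Or.inr ⟨b, hb, h, hr⟩
      · have ha' : a ∈ ({v}ᶜ : Set V) := by simpa using ha
        refine Or.inl ⟨ha', Reachable.trans ?_ hr⟩
        exact SimpleGraph.Adj.reachable (by exact h : (G.induce ({v}ᶜ : Set V)).Adj ⟨a, ha'⟩ ⟨b, hb⟩)
    · exact Or.inr ⟨w, hw, hadj, hr⟩

lemma mem_image_supp_of_adj {v : V} {c : (G.induce ({v}ᶜ : Set V)).ConnectedComponent}
    {x y : V} (hx : x ∈ Subtype.val '' c.supp) (hy : y ∈ ({v}ᶜ : Set V))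
    (hadj : G.Adj x y) : y ∈ Subtype.val '' c.supp := by
  obtain ⟨⟨x, hxm⟩, hxc, rfl⟩ := hx
  refine ⟨⟨y, hy⟩, ?_, rfl⟩
  rw [SimpleGraph.ConnectedComponent.mem_supp_iff] at hxc ⊢
  rw [← hxc]
  exact SimpleGraph.ConnectedComponent.eq.mpr
    (SimpleGraph.Adj.reachable (by exact hadj.symm :
      (G.induce ({v}ᶜ : Set V)).Adj ⟨y, hy⟩ ⟨x, hxm⟩))

/-- If the partner of `v` under a perfect matching is not in a component `c` of
`G - v`, then `c` has an even number of vertices. -/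
lemma even_component {v : V} {M : Set (Sym2 V)} (hM : IsPM G M)
    {c : (G.induce ({v}ᶜ : Set V)).ConnectedComponent} {f : V → V}
    (hadjf : ∀ x, G.Adj x (f x)) (huniq : ∀ x y, s(x, y) ∈ M → y = f x)
    (hinv : ∀ x, f (f x) = x)
    (hfv : f v ∉ Subtype.val '' c.supp) :
    Even (Subtype.val '' c.supp : Set V).ncard := by
  refine even_ncard_of_involution f (fun x hx => ?_) hinv
    (fun x hx => (hadjf x).ne')
  have hxv : x ≠ v := by
    obtain ⟨⟨x', hx'⟩, _, rfl⟩ := hx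
    simpa using hx'
  have hfxv : f x ≠ v := by
    intro h
    apply hfv
    have hxfv : x = f v := by rw [← hinv x, h]
    exact hxfv ▸ hx
  exact mem_image_supp_of_adj hx (by simpa using hfxv) (hadjf x)

/-- If the partner of `v` under a perfect matching lies in a component `c` of
`G - v`, then `c` has an odd number of vertices. -/
lemma odd_component {v : V} {M : Set (Sym2 V)} (hM : IsPM G M)
    {c : (G.induce ({v}ᶜ : Set V)).ConnectedComponent} {f : V → V}
    (hadjf : ∀ x, G.Adj x (f x)) (huniq : ∀ x y, s(x, y) ∈ M → y = f x)
    (hinv : ∀ x, f (f x) = x)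
    (hfv : f v ∈ Subtype.val '' c.supp) :
    Odd (Subtype.val '' c.supp : Set V).ncard := by
  have hfin : (Subtype.val '' c.supp : Set V).Finite := Set.toFinite _
  have heven : Even ((Subtype.val '' c.supp : Set V) \ {f v}).ncard := by
    refine even_ncard_of_involution f (fun x hx => ?_) hinv (fun x hx => (hadjf x).ne')
    obtain ⟨hxS, hxne⟩ := hx
    have hxne : x ≠ f v := hxne
    have hxv : x ≠ v := by
      obtain ⟨⟨x', hx'⟩, _, rfl⟩ := hxS
      simpa using hx'
    have hfxv : f x ≠ v := by
      intro h
      apply hxne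
      rw [← hinv x, h]
    have hfxnefv : f x ≠ f v := by
      intro h
      apply hxv
      rw [← hinv x, h, hinv]
    exact ⟨mem_image_supp_of_adj hxS (by simpa using hfxv) (hadjf x), hfxnefv⟩
  have hkey : ((Subtype.val '' c.supp : Set V) \ {f v}).ncard + 1 =
      (Subtype.val '' c.supp : Set V).ncard :=
    Set.ncard_diff_singleton_add_one hfv hfin
  rw [← hkey]
  exact heven.add_one

end Aux

/-- A matching covered graph has no cut vertex. -/
theorem stmt1 {V : Type*} [Fintype V] (G : SimpleGraph V)
    (hG : MatchingCovered G) (v : V) :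
    (G.induce ({v}ᶜ : Set V)).Connected := by
  classical
  obtain ⟨hconn, hcard, hpm⟩ := hG
  have hne : Nonempty ({v}ᶜ : Set V) := by
    obtain ⟨u, hu⟩ := Fintype.exists_ne_of_one_lt_card
      (by rw [← Nat.card_eq_fintype_card]; omega) v
    exact ⟨⟨u, by simpa using hu⟩⟩
  rw [SimpleGraph.connected_iff]
  refine ⟨?_, hne⟩
  rintro ⟨x, hx⟩ ⟨y, hy⟩
  by_contra hnr
  have hxy : G.Reachable x y := hconn.preconnected x y
  have hyx : G.Reachable y x := hxy.symm
  -- get a neighbor of v in the component of y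
  obtain ⟨hx', hr⟩ | ⟨w₂, hw₂, hadj₂, hr₂⟩ := reach_aux hxy.some hy
  · exact hnr hr
  obtain ⟨hy', hr⟩ | ⟨w₁, hw₁, hadj₁, hr₁⟩ := reach_aux hyx.some hx
  · exact hnr hr.symm
  -- the components
  set G' := G.induce ({v}ᶜ : Set V) with hG'
  set c : G'.ConnectedComponent := G'.connectedComponentMk ⟨y, hy⟩ with hc
  have hw₂c : (⟨w₂, hw₂⟩ : ({v}ᶜ : Set V)) ∈ c.supp := by
    rw [SimpleGraph.ConnectedComponent.mem_supp_iff]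
    exact SimpleGraph.ConnectedComponent.eq.mpr hr₂
  -- perfect matchings through the two edges at v
  obtain ⟨M₂, hM₂, hM₂e⟩ := hpm s(v, w₂) ((SimpleGraph.mem_edgeSet G).mpr hadj₂)
  obtain ⟨M₁, hM₁, hM₁e⟩ := hpm s(v, w₁) ((SimpleGraph.mem_edgeSet G).mpr hadj₁)
  obtain ⟨f₂, hadjf₂, huniq₂, hinv₂, -⟩ := exists_pm_partner hM₂
  obtain ⟨f₁, hadjf₁, huniq₁, hinv₁, -⟩ := exists_pm_partner hM₁
  have hf₂v : f₂ v = w₂ := (huniq₂ v w₂ hM₂e).symm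
  have hf₁v : f₁ v = w₁ := (huniq₁ v w₁ hM₁e).symm
  -- odd from M₂
  have hodd : Odd (Subtype.val '' c.supp : Set V).ncard := by
    refine odd_component hM₂ hadjf₂ huniq₂ hinv₂ ?_
    rw [hf₂v]
    exact ⟨⟨w₂, hw₂⟩, hw₂c, rfl⟩
  -- even from M₁
  have heven : Even (Subtype.val '' c.supp : Set V).ncard := by
    refine even_component hM₁ hadjf₁ huniq₁ hinv₁ ?_
    rw [hf₁v]
    rintro ⟨⟨w₁', hw₁'⟩, hw₁c, h⟩
    apply hnr
    rw [SimpleGraph.ConnectedComponent.mem_supp_iff, hc] at hw₁c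
    have h2 : G'.Reachable ⟨w₁', hw₁'⟩ ⟨y, hy⟩ := SimpleGraph.ConnectedComponent.eq.mp hw₁c
    have h3 : (⟨w₁', hw₁'⟩ : ({v}ᶜ : Set V)) = ⟨w₁, hw₁⟩ := Subtype.ext h
    rw [h3] at h2
    exact hr₁.symm.trans h2
  exact (Nat.not_odd_iff_even.mpr heven) hodd
end

section
/- Let G be a connected graph with a perfect matching. Then G is matching covered if and only if every barrier of G is a stable (independent) set. -/
open SimpleGraph

open SimpleGraph Set Function
set_option linter.unusedSectionVars false
set_option linter.unusedVariables false
namespace TutteAux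
variable {V : Type*} [Fintype V] {G : SimpleGraph V}

/-- A matching of `G` covering exactly the set `A`, as a set of edges. -/
def Mon (G : SimpleGraph V) (A : Set V) (M : Set (Sym2 V)) : Prop :=
  M ⊆ G.edgeSet ∧ (∀ e ∈ M, ∀ v ∈ e, v ∈ A) ∧ ∀ v ∈ A, ∃! e, e ∈ M ∧ v ∈ e

/-- `G` has a matching covering exactly `A`. -/
def PMon (G : SimpleGraph V) (A : Set V) : Prop := ∃ M, Mon G A M

/-- number of odd components of the subgraph induced on `A`. -/
noncomputable def oc (G : SimpleGraph V) (A : Set V) : ℕ :=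
  Nat.card {c : (G.induce A).ConnectedComponent // Odd (Nat.card c.supp)}

lemma Mon.partner {A : Set V} {M : Set (Sym2 V)} (hM : Mon G A M) {v : V} (hv : v ∈ A) :
    ∃ w, s(v, w) ∈ M ∧ w ≠ v ∧ w ∈ A ∧ ∀ w', s(v, w') ∈ M → w' = w := by
  obtain ⟨e, ⟨heM, hve⟩, hu⟩ := hM.2.2 v hv
  obtain ⟨w, rfl⟩ := Sym2.mem_iff_exists.mp hve
  refine ⟨w, heM, ?_, ?_, ?_⟩
  · rintro rfl
    exact (G.irrefl (hM.1 heM))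
  · exact hM.2.1 _ heM w (Sym2.mem_mk_right _ _)
  · intro w' hw'
    have := hu s(v, w') ⟨hw', Sym2.mem_mk_left _ _⟩
    exact Sym2.congr_right.mp this

lemma Mon.even_closed {A T : Set V} {M : Set (Sym2 V)} (hM : Mon G A M) (hTA : T ⊆ A)
    (hcl : ∀ v ∈ T, ∀ w, s(v, w) ∈ M → w ∈ T) : Even T.ncard := by
  classical
  -- build a subgraph of G whose verts are T and which is a matching
  let H : G.Subgraph :=
    { verts := T
      Adj := fun x y => s(x, y) ∈ M ∧ x ∈ T ∧ y ∈ T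
      adj_sub := fun h => (G.mem_edgeSet).mp (hM.1 h.1)
      edge_vert := fun h => h.2.1
      symm := ⟨fun x y h => ⟨Sym2.eq_swap ▸ h.1, h.2.2, h.2.1⟩⟩ }
  have hHm : H.IsMatching := by
    intro v hv
    obtain ⟨w, hwM, hwv, hwA, huniq⟩ := hM.partner (hTA hv)
    exact ⟨w, ⟨hwM, hv, hcl v hv w hwM⟩, fun y hy => huniq y hy.1⟩
  have := hHm.even_card
  simpa [H, Set.ncard_eq_toFinset_card'] using this

lemma parity (G : SimpleGraph V) (A : Set V) : oc G A % 2 = A.ncard % 2 := by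
  classical
  letI : Fintype (G.induce A).ConnectedComponent := Fintype.ofFinite _
  rw [← ZMod.natCast_eq_natCast_iff']
  have h1 : Nat.card A = ∑ c : (G.induce A).ConnectedComponent, Nat.card c.supp := by
    simp only [Nat.card_eq_fintype_card]
    rw [← Fintype.card_sigma]
    exact Fintype.card_congr
      ((Equiv.sigmaFiberEquiv ((G.induce A).connectedComponentMk)).symm.trans
        (Equiv.sigmaCongrRight fun c =>
          Equiv.subtypeEquivRight fun v => (ConnectedComponent.mem_supp_iff c v).symm))
  have h2 : ∀ n : ℕ, (n : ZMod 2) = if Odd n then 1 else 0 := by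
    intro n
    rcases Nat.even_or_odd n with h | h
    · rw [if_neg (Nat.not_odd_iff_even.mpr h)]
      exact (ZMod.natCast_eq_zero_iff _ _).mpr h.two_dvd
    · rw [if_pos h]
      obtain ⟨k, rfl⟩ := h
      push_cast
      rw [show ((2 : ZMod 2)) = 0 from rfl]
      ring
  have h3 : (oc G A : ZMod 2) = ∑ c : (G.induce A).ConnectedComponent,
      if Odd (Nat.card c.supp) then (1 : ZMod 2) else 0 := by
    rw [Finset.sum_boole, oc, Nat.card_eq_fintype_card, Fintype.card_subtype]
  rw [← Nat.card_coe_set_eq, h1, h3]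
  push_cast
  exact (Finset.sum_congr rfl fun c _ => h2 _).symm

lemma supp_eq_iff {A : Set V} {c d : (G.induce A).ConnectedComponent}
    (h : Subtype.val '' c.supp = Subtype.val '' d.supp) : c = d := by
  obtain ⟨v, hv⟩ := c.exists_rep
  have hvc : v ∈ c.supp := by rw [ConnectedComponent.mem_supp_iff]; exact hv
  have : (v : V) ∈ Subtype.val '' d.supp := h ▸ ⟨v, hvc, rfl⟩
  obtain ⟨w, hw, hwv⟩ := this
  have hwv' : w = v := Subtype.ext hwv
  subst hwv'
  rw [← hv]
  exact (ConnectedComponent.mem_supp_iff d w).mp hw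

lemma supp_nonempty {A : Set V} (c : (G.induce A).ConnectedComponent) :
    (Subtype.val '' c.supp).Nonempty := by
  obtain ⟨v, hv⟩ := c.exists_rep
  exact ⟨v, v, by rw [ConnectedComponent.mem_supp_iff]; exact hv, rfl⟩

lemma supp_sub {A : Set V} (c : (G.induce A).ConnectedComponent) :
    Subtype.val '' c.supp ⊆ A := by
  rintro x ⟨⟨x, hx⟩, _, rfl⟩; exact hx

lemma comp_closed {A : Set V} (c : (G.induce A).ConnectedComponent) {x y : V}
    (hx : x ∈ Subtype.val '' c.supp) (hy : y ∈ A) (hadj : G.Adj x y) :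
    y ∈ Subtype.val '' c.supp := by
  obtain ⟨⟨x', hx'⟩, hxc, rfl⟩ := hx
  refine ⟨⟨y, hy⟩, ?_, rfl⟩
  rw [ConnectedComponent.mem_supp_iff] at hxc ⊢
  rw [← hxc]
  exact ConnectedComponent.sound (Reachable.symm ⟨Walk.cons (by exact hadj : (G.induce A).Adj ⟨x', hx'⟩ ⟨y, hy⟩) Walk.nil⟩)

/-- inclusion hom between induced subgraphs -/
def incl {A B : Set V} (h : A ⊆ B) : G.induce A →g G.induce B :=
  ⟨Set.inclusion h, fun {a b} hab => hab⟩

lemma reach_mono {A B : Set V} (hAB : A ⊆ B) {x y : V} {hx : x ∈ A} {hy : y ∈ A}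
    (h : (G.induce A).Reachable ⟨x, hx⟩ ⟨y, hy⟩) :
    (G.induce B).Reachable ⟨x, hAB hx⟩ ⟨y, hAB hy⟩ := by
  obtain ⟨w⟩ := h
  exact ⟨w.map (incl hAB)⟩

lemma reach_down {A B : Set V} : ∀ {x y : {v // v ∈ A}} (w : (G.induce A).Walk x y)
    (_ : ∀ z ∈ w.support, ↑z ∈ B) (hx : ↑x ∈ B) (hy : ↑y ∈ B),
    (G.induce B).Reachable ⟨x, hx⟩ ⟨y, hy⟩ := by
  intro x y w
  induction w with
  | nil => intro _ hx hy; exact Reachable.refl _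
  | @cons a b c hab w ih =>
    intro hsupp hx hy
    have hb : (b : V) ∈ B := hsupp b (by simp [Walk.support_cons])
    refine Reachable.trans ⟨Walk.cons (show (G.induce B).Adj ⟨↑a, hx⟩ ⟨↑b, hb⟩ from hab) Walk.nil⟩ (ih ?_ hb hy)
    intro z hz
    exact hsupp z (by simp [Walk.support_cons, hz])

lemma mem_supp_val {A : Set V} {c : (G.induce A).ConnectedComponent} {x : {v // v ∈ A}}
    (hx : x ∈ c.supp) : (x : V) ∈ Subtype.val '' c.supp := ⟨x, hx, rfl⟩

lemma reach_of_mem_support {W : Type*} {H : SimpleGraph W} :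
    ∀ {x y z : W} (w : H.Walk x y), z ∈ w.support → H.Reachable x z := by
  intro x y z w
  induction w with
  | nil => intro h; rw [Walk.support_nil, List.mem_singleton] at h; exact h ▸ Reachable.refl _
  | @cons a b c hab p ih =>
    intro h
    rw [Walk.support_cons, List.mem_cons] at h
    rcases h with h | h
    · exact h ▸ Reachable.refl _
    · exact Reachable.trans hab.reachable (ih h)

lemma walk_closed {B : Set V} {P : Set V}
    (hP : ∀ x y, x ∈ P → y ∈ B → G.Adj x y → y ∈ P) :
    ∀ {x y : {v // v ∈ B}} (w : (G.induce B).Walk x y), (x : V) ∈ P → (y : V) ∈ P := by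
  intro x y w
  induction w with
  | nil => exact id
  | @cons a b c hab p ih =>
    intro ha
    exact ih (hP _ _ ha b.2 hab)

/-- Transfer a component downwards: its support lies in a smaller vertex set. -/
lemma comp_restrict {A B : Set V} (hBA : B ⊆ A) (c : (G.induce A).ConnectedComponent)
    (hsup : Subtype.val '' c.supp ⊆ B) :
    ∃ c' : (G.induce B).ConnectedComponent, Subtype.val '' c'.supp = Subtype.val '' c.supp := by
  obtain ⟨v, hv⟩ := c.exists_rep
  have hvc : v ∈ c.supp := by rw [ConnectedComponent.mem_supp_iff]; exact hv
  have hvB : (v : V) ∈ B := hsup (mem_supp_val hvc)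
  refine ⟨(G.induce B).connectedComponentMk ⟨v, hvB⟩, Set.ext fun x => ⟨?_, ?_⟩⟩
  · rintro ⟨⟨x, hxB⟩, hx, rfl⟩
    rw [ConnectedComponent.mem_supp_iff, ConnectedComponent.eq] at hx
    have := reach_mono hBA (hx := hvB) (hy := hxB) (by
      convert hx.symm using 2 <;> exact Subtype.ext rfl)
    refine ⟨⟨x, hBA hxB⟩, ?_, rfl⟩
    rw [ConnectedComponent.mem_supp_iff, ← hv]
    apply ConnectedComponent.sound
    have h2 : (⟨(v : V), hBA hvB⟩ : {z // z ∈ A}) = v := Subtype.ext rfl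
    exact h2 ▸ this.symm
  · rintro ⟨⟨x, hxA⟩, hx, rfl⟩
    rw [ConnectedComponent.mem_supp_iff] at hx
    have hreach : (G.induce A).Reachable v ⟨x, hxA⟩ := by
      rw [← ConnectedComponent.eq, hx]; exact hv
    obtain ⟨w⟩ := hreach
    have hsupp : ∀ z ∈ w.support, (z : V) ∈ B := by
      intro z hz
      apply hsup
      apply mem_supp_val
      rw [ConnectedComponent.mem_supp_iff, ← hv]
      exact (ConnectedComponent.sound (reach_of_mem_support w hz)).symm
    have hxB : x ∈ B := by
      have := hsupp ⟨x, hxA⟩ (Walk.end_mem_support w)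
      exact this
    have := reach_down w hsupp hvB hxB
    refine ⟨⟨x, hxB⟩, ?_, rfl⟩
    rw [ConnectedComponent.mem_supp_iff, ConnectedComponent.eq]
    refine Reachable.symm ?_
    convert this using 2 <;> exact Subtype.ext rfl

/-- Transfer a component upwards: its support is closed under adjacency in the larger set. -/
lemma comp_transfer {A B : Set V} (hAB : A ⊆ B) (c : (G.induce A).ConnectedComponent)
    (hcl : ∀ x y, x ∈ Subtype.val '' c.supp → y ∈ B → G.Adj x y → y ∈ Subtype.val '' c.supp) :
    ∃ c' : (G.induce B).ConnectedComponent, Subtype.val '' c'.supp = Subtype.val '' c.supp := by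
  obtain ⟨v, hv⟩ := c.exists_rep
  have hvc : v ∈ c.supp := by rw [ConnectedComponent.mem_supp_iff]; exact hv
  refine ⟨(G.induce B).connectedComponentMk ⟨v, hAB v.2⟩, Set.ext fun x => ⟨?_, ?_⟩⟩
  · rintro ⟨⟨x, hxB⟩, hx, rfl⟩
    rw [ConnectedComponent.mem_supp_iff, ConnectedComponent.eq] at hx
    obtain ⟨w⟩ := hx.symm
    exact walk_closed hcl w (mem_supp_val hvc)
  · rintro ⟨⟨x, hxA⟩, hx, rfl⟩
    rw [ConnectedComponent.mem_supp_iff] at hx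
    have hreach : (G.induce A).Reachable v ⟨x, hxA⟩ := by
      rw [← ConnectedComponent.eq, hx]; exact hv
    have := reach_mono hAB (hx := v.2) (hy := hxA) (by
      convert hreach using 2 <;> exact Subtype.ext rfl)
    refine ⟨⟨x, hAB hxA⟩, ?_, rfl⟩
    rw [ConnectedComponent.mem_supp_iff, ConnectedComponent.eq]
    exact this.symm

lemma card_supp_eq_of_image {A B : Set V} {c : (G.induce A).ConnectedComponent}
    {c' : (G.induce B).ConnectedComponent}
    (h : Subtype.val '' c'.supp = Subtype.val '' c.supp) :
    Nat.card c'.supp = Nat.card c.supp := by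
  rw [Nat.card_coe_set_eq, Nat.card_coe_set_eq,
    ← Set.ncard_image_of_injective c'.supp Subtype.val_injective,
    ← Set.ncard_image_of_injective c.supp Subtype.val_injective, h]

lemma Mon.adj {A : Set V} {M : Set (Sym2 V)} (hM : Mon G A M) {x y : V}
    (h : s(x, y) ∈ M) : G.Adj x y := (G.mem_edgeSet).mp (hM.1 h)

lemma odd_comp_matched {A S : Set V} {M : Set (Sym2 V)} (hM : Mon G A M) (hS : S ⊆ A)
    (c : (G.induce (A \ S)).ConnectedComponent) (hodd : Odd (Nat.card c.supp)) :
    ∃ x y, x ∈ Subtype.val '' c.supp ∧ y ∈ S ∧ s(x, y) ∈ M := by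
  by_contra hcon
  push_neg at hcon
  have hTA : Subtype.val '' c.supp ⊆ A := fun x hx => (supp_sub c hx).1
  have heven : Even (Subtype.val '' c.supp).ncard := by
    refine hM.even_closed hTA ?_
    intro v hv w hw
    have hvA : v ∈ A := hTA hv
    have hwA : w ∈ A := hM.2.1 _ hw w (Sym2.mem_mk_right _ _)
    have hwS : w ∉ S := fun hwS => hcon v w hv hwS hw
    exact comp_closed c hv ⟨hwA, hwS⟩ (hM.adj hw)
  rw [← Nat.not_even_iff_odd] at hodd
  apply hodd
  rwa [Nat.card_coe_set_eq, ← Set.ncard_image_of_injective c.supp Subtype.val_injective]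

lemma exists_inj {A S : Set V} {M : Set (Sym2 V)} (hM : Mon G A M) (hS : S ⊆ A) :
    ∃ f : {c : (G.induce (A \ S)).ConnectedComponent // Odd (Nat.card c.supp)} → V,
      Injective f ∧ ∀ c, f c ∈ S ∧ ∃ x ∈ Subtype.val '' c.1.supp, s(x, f c) ∈ M := by
  have h := fun c : {c : (G.induce (A \ S)).ConnectedComponent // Odd (Nat.card c.supp)} =>
    odd_comp_matched hM hS c.1 c.2
  choose x y hx hy hxy using h
  refine ⟨y, ?_, fun c => ⟨hy c, x c, hx c, hxy c⟩⟩
  intro c d hcd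
  have hyA : y c ∈ A := hS (hy c)
  obtain ⟨w, hwM, hwne, hwA, huniq⟩ := hM.partner hyA
  have hxc : x c = w := huniq _ (Sym2.eq_swap ▸ hxy c)
  have hxd : x d = w := huniq _ (Sym2.eq_swap ▸ (hcd ▸ hxy d))
  obtain ⟨⟨xc, hxc'⟩, hmemc, hvc⟩ := hx c
  obtain ⟨⟨xd, hxd'⟩, hmemd, hvd⟩ := hx d
  have hxcw : xc = w := by rw [← hxc]; exact hvc
  have hxdw : xd = w := by rw [← hxd]; exact hvd
  have he : (⟨xc, hxc'⟩ : {v // v ∈ A \ S}) = ⟨xd, hxd'⟩ := Subtype.ext (show xc = xd by rw [hxcw, hxdw])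
  rw [he] at hmemc
  rw [ConnectedComponent.mem_supp_iff] at hmemc hmemd
  exact Subtype.ext (hmemc.symm.trans hmemd)

lemma oc_le {A S : Set V} {M : Set (Sym2 V)} (hM : Mon G A M) (hS : S ⊆ A) :
    oc G (A \ S) ≤ S.ncard := by
  obtain ⟨f, hinj, hf⟩ := exists_inj hM hS
  rw [oc, ← Nat.card_coe_set_eq]
  exact Nat.card_le_card_of_injective (fun c => (⟨f c, (hf c).1⟩ : S))
    (fun c d h => hinj (congrArg Subtype.val h))

lemma even_card_of_mon {M : Set (Sym2 V)} (hM : Mon G Set.univ M) :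
    (Set.univ : Set V).ncard % 2 = 0 := by
  rw [Nat.even_iff.mp (hM.even_closed (le_refl _) (fun v _ w _ => Set.mem_univ w))]


section MaxB
variable {A B : Set V}

lemma allodd (hcond : ∀ S ⊆ A, oc G (A \ S) ≤ S.ncard) (hBA : B ⊆ A)
    (hBbar : oc G (A \ B) = B.ncard)
    (hBmax : ∀ B', B' ⊆ A → oc G (A \ B') = B'.ncard → B.ncard ≤ B'.ncard → B.ncard = B'.ncard)
    (c : (G.induce (A \ B)).ConnectedComponent) : Odd (Nat.card c.supp) := by
  by_contra hceven
  obtain ⟨v, hvmem⟩ := supp_nonempty c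
  have hvAB : v ∈ A \ B := supp_sub c hvmem
  set B' : Set V := insert v B with hB'
  have hB'A : B' ⊆ A := Set.insert_subset hvAB.1 hBA
  have hncard : B'.ncard = B.ncard + 1 := Set.ncard_insert_of_notMem hvAB.2 B.toFinite
  have hsub : A \ B' ⊆ A \ B := fun x hx => ⟨hx.1, fun hxB => hx.2 (Set.mem_insert_of_mem _ hxB)⟩
  have hdiff : A \ B' = (A \ B) \ {v} := by
    ext x; simp only [hB', Set.mem_diff, Set.mem_insert_iff, Set.mem_singleton_iff]; tauto
  -- transfer the odd components
  have hstep : ∀ d : {d : (G.induce (A \ B)).ConnectedComponent // Odd (Nat.card d.supp)},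
      ∃ d' : (G.induce (A \ B')).ConnectedComponent,
        Odd (Nat.card d'.supp) ∧ Subtype.val '' d'.supp = Subtype.val '' d.1.supp := by
    rintro ⟨d, hd⟩
    have hdc : d ≠ c := fun h => hceven (h ▸ hd)
    have hdsub : Subtype.val '' d.supp ⊆ A \ B' := by
      intro x hx
      refine hdiff ▸ ⟨supp_sub d hx, ?_⟩
      rintro rfl
      obtain ⟨x', hx', hvx⟩ := hx
      obtain ⟨v', hv', hvv⟩ := hvmem
      have hxv : x' = v' := Subtype.ext (hvx.trans hvv.symm)
      subst hxv
      rw [ConnectedComponent.mem_supp_iff] at hx' hv'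
      exact hdc (hx'.symm.trans hv')
    obtain ⟨d', hd'⟩ := comp_restrict hsub d hdsub
    exact ⟨d', by rw [card_supp_eq_of_image hd']; exact hd, hd'⟩
  choose g hgodd hgsupp using hstep
  have hginj : Injective g := by
    intro d e h
    exact Subtype.ext (supp_eq_iff ((hgsupp d).symm.trans (h ▸ hgsupp e)))
  have hle : B.ncard ≤ oc G (A \ B') := by
    rw [← hBbar, oc, oc]
    exact Nat.card_le_card_of_injective (fun d => ⟨g d, hgodd d⟩)
      (fun d e h => hginj (congrArg Subtype.val h))
  have hub : oc G (A \ B') ≤ B.ncard + 1 := hncard ▸ hcond B' hB'A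
  have hpar : oc G (A \ B') % 2 = (A \ B').ncard % 2 := parity G _
  have hpar2 : oc G (A \ B) % 2 = (A \ B).ncard % 2 := parity G _
  have hABv : (A \ B').ncard = (A \ B).ncard - 1 := by
    rw [hdiff, Set.ncard_diff_singleton_of_mem hvAB]
  have hpos : 1 ≤ (A \ B).ncard := (Set.ncard_pos (Set.toFinite _)).mpr ⟨v, hvAB⟩
  have hoc' : oc G (A \ B') = B'.ncard := by omega
  have := hBmax B' hB'A hoc' (by omega)
  omega

end MaxB

lemma comp_eq_of_common {A : Set V} {c d : (G.induce A).ConnectedComponent} {x : V}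
    (hx : x ∈ Subtype.val '' c.supp) (hx' : x ∈ Subtype.val '' d.supp) : c = d := by
  obtain ⟨x1, h1, e1⟩ := hx
  obtain ⟨x2, h2, e2⟩ := hx'
  have hx12 : x1 = x2 := Subtype.ext (e1.trans e2.symm)
  subst hx12
  rw [ConnectedComponent.mem_supp_iff] at h1 h2
  exact h1.symm.trans h2

lemma count {A B : Set V} (hBbar : oc G (A \ B) = B.ncard)
    (hallodd : ∀ c : (G.induce (A \ B)).ConnectedComponent, Odd (Nat.card c.supp)) :
    Nat.card (G.induce (A \ B)).ConnectedComponent = B.ncard := by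
  rw [← hBbar, oc]
  exact (Nat.card_congr (Equiv.subtypeUnivEquiv hallodd)).symm

lemma tutteS {A B : Set V} (hcond : ∀ S ⊆ A, oc G (A \ S) ≤ S.ncard) (hBA : B ⊆ A)
    (hBbar : oc G (A \ B) = B.ncard)
    (hBmax : ∀ B', B' ⊆ A → oc G (A \ B') = B'.ncard → B.ncard ≤ B'.ncard → B.ncard = B'.ncard)
    (c : (G.induce (A \ B)).ConnectedComponent) {x₀ : V}
    (hx₀ : x₀ ∈ Subtype.val '' c.supp) {S : Set V}
    (hS : S ⊆ Subtype.val '' c.supp \ {x₀}) :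
    oc G ((Subtype.val '' c.supp \ {x₀}) \ S) ≤ S.ncard := by
  classical
  have hallodd := allodd hcond hBA hBbar hBmax
  by_contra hbad
  push_neg at hbad
  set C := Subtype.val '' c.supp with hC
  set A' := (C \ {x₀}) \ S with hA'
  have hCAB : C ⊆ A \ B := supp_sub c
  have hx₀S : x₀ ∉ S := fun h => (hS h).2 rfl
  have hiC : insert x₀ S ⊆ C := Set.insert_subset hx₀ (fun x hx => (hS hx).1)
  set T := B ∪ insert x₀ S with hT
  have hTA : T ⊆ A := Set.union_subset hBA (fun x hx => (hCAB (hiC hx)).1)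
  have hAT : A \ T = (A \ B) \ insert x₀ S := by
    ext x; simp only [hT, Set.mem_diff, Set.mem_union]; tauto
  have hA'sub : A' ⊆ A \ T := by
    intro x hx
    rw [hAT]
    exact ⟨hCAB hx.1.1, fun hxi => hxi.elim (fun h => hx.1.2 h) (fun h => hx.2 h)⟩
  have hATsub : A \ T ⊆ A \ B := hAT ▸ fun x hx => hx.1
  -- transfer the other odd components of A \ B
  have hleft : ∀ d : {d : (G.induce (A \ B)).ConnectedComponent // d ≠ c},
      ∃ d' : (G.induce (A \ T)).ConnectedComponent,
        Odd (Nat.card d'.supp) ∧ Subtype.val '' d'.supp = Subtype.val '' d.1.supp := by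
    rintro ⟨d, hdc⟩
    have hdsub : Subtype.val '' d.supp ⊆ A \ T := by
      intro x hx
      rw [hAT]
      exact ⟨supp_sub d hx, fun hxi => hdc (comp_eq_of_common hx (hiC hxi))⟩
    obtain ⟨d', hd'⟩ := comp_restrict hATsub d hdsub
    exact ⟨d', by rw [card_supp_eq_of_image hd']; exact hallodd d, hd'⟩
  -- transfer the odd components of A'
  have hright : ∀ e : {e : (G.induce A').ConnectedComponent // Odd (Nat.card e.supp)},
      ∃ e' : (G.induce (A \ T)).ConnectedComponent,
        Odd (Nat.card e'.supp) ∧ Subtype.val '' e'.supp = Subtype.val '' e.1.supp := by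
    rintro ⟨e, he⟩
    have hcl : ∀ x y, x ∈ Subtype.val '' e.supp → y ∈ A \ T → G.Adj x y →
        y ∈ Subtype.val '' e.supp := by
      intro x y hx hy hadj
      have hxA' : x ∈ A' := supp_sub e hx
      have hyAB : y ∈ (A \ B) \ insert x₀ S := hAT ▸ hy
      have hyC : y ∈ C := comp_closed c hxA'.1.1 hyAB.1 hadj
      have hyA' : y ∈ A' := ⟨⟨hyC, fun h => hyAB.2 (Or.inl h)⟩, fun h => hyAB.2 (Or.inr h)⟩
      exact comp_closed e hx hyA' hadj
    obtain ⟨e', he'⟩ := comp_transfer hA'sub e hcl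
    exact ⟨e', by rw [card_supp_eq_of_image he']; exact he, he'⟩
  choose gl hglodd hglim using hleft
  choose gr hgrodd hgrim using hright
  have hinj : Injective (Sum.elim
      (fun d => (⟨gl d, hglodd d⟩ : {c' : (G.induce (A \ T)).ConnectedComponent // Odd (Nat.card c'.supp)}))
      (fun e => ⟨gr e, hgrodd e⟩)) := by
    have hcross : ∀ (d' : {d : (G.induce (A \ B)).ConnectedComponent // d ≠ c})
        (e' : {e : (G.induce A').ConnectedComponent // Odd (Nat.card e.supp)}),
        gl d' ≠ gr e' := by
      intro d' e' h
      obtain ⟨z, hz⟩ := supp_nonempty e'.1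
      have hz1 : z ∈ Subtype.val '' (gr e').supp := by rw [hgrim e']; exact hz
      have hz2 : z ∈ Subtype.val '' d'.1.supp := by rw [← hglim d', h]; exact hz1
      have hzC : z ∈ C := (supp_sub e'.1 hz).1.1
      exact d'.2 (comp_eq_of_common hz2 hzC)
    rintro (d1 | e1) (d2 | e2) h <;> simp only [Sum.elim_inl, Sum.elim_inr, Subtype.mk.injEq] at h
    · have : d1.1 = d2.1 := supp_eq_iff ((hglim d1).symm.trans (h ▸ hglim d2))
      rw [Sum.inl.injEq]; exact Subtype.ext this
    · exact absurd h (hcross d1 e2)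
    · exact absurd h.symm (hcross d2 e1)
    · have : e1.1 = e2.1 := supp_eq_iff ((hgrim e1).symm.trans (h ▸ hgrim e2))
      rw [Sum.inr.injEq]; exact Subtype.ext this
  have hocT : Nat.card {d : (G.induce (A \ B)).ConnectedComponent // d ≠ c} + oc G A'
      ≤ oc G (A \ T) := by
    have h := Nat.card_le_card_of_injective _ hinj
    rwa [Nat.card_sum] at h
  have hccount := count hBbar hallodd
  have hdnec : Nat.card {d : (G.induce (A \ B)).ConnectedComponent // d ≠ c}
      = B.ncard - 1 := by
    letI := Fintype.ofFinite (G.induce (A \ B)).ConnectedComponent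
    rw [← hccount, Nat.card_eq_fintype_card, Nat.card_eq_fintype_card]
    have := Fintype.card_subtype_compl (fun d : (G.induce (A \ B)).ConnectedComponent => d = c)
    simpa [Fintype.card_subtype_eq] using this
  have eb1 : 1 ≤ B.ncard := by
    rw [← hccount]
    have : Nonempty (G.induce (A \ B)).ConnectedComponent := ⟨c⟩
    exact Nat.card_pos
  have hdisjT : Disjoint B (insert x₀ S) := by
    rw [Set.disjoint_right]
    exact fun a ha => (hCAB (hiC ha)).2
  have eT : T.ncard = B.ncard + S.ncard + 1 := by
    rw [hT, Set.ncard_union_eq hdisjT (Set.toFinite _) (Set.toFinite _),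
      Set.ncard_insert_of_notMem hx₀S (Set.toFinite _)]
    ring
  have e1 : oc G (A \ T) ≤ T.ncard := hcond T hTA
  have ep1 : oc G (A \ T) % 2 = (A \ T).ncard % 2 := parity G _
  have ep2 : oc G A' % 2 = A'.ncard % 2 := parity G _
  have ep3 : (A \ B).ncard % 2 = B.ncard % 2 := by rw [← hBbar]; exact (parity G _).symm
  have eAT : (A \ T).ncard = (A \ B).ncard - (S.ncard + 1) := by
    rw [hAT, Set.ncard_diff (hiC.trans hCAB) (Set.toFinite _),
      Set.ncard_insert_of_notMem hx₀S (Set.toFinite _)]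
  have eA' : A'.ncard = C.ncard - 1 - S.ncard := by
    rw [hA', Set.ncard_diff hS (Set.toFinite _),
      Set.ncard_diff_singleton_of_mem hx₀]
  have eCodd : C.ncard % 2 = 1 := by
    have : C.ncard = Nat.card c.supp := by
      rw [Nat.card_coe_set_eq, hC, Set.ncard_image_of_injective c.supp Subtype.val_injective]
    rw [this]
    exact Nat.odd_iff.mp (hallodd c)
  have eCS : S.ncard + 1 ≤ C.ncard := by
    have h1 := Set.ncard_le_ncard hiC (Set.toFinite _)
    rwa [Set.ncard_insert_of_notMem hx₀S (Set.toFinite _)] at h1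
  have eABS : S.ncard + 1 ≤ (A \ B).ncard := by
    have h1 := Set.ncard_le_ncard (hiC.trans hCAB) (Set.toFinite _)
    rwa [Set.ncard_insert_of_notMem hx₀S (Set.toFinite _)] at h1
  have eCAB : C.ncard ≤ (A \ B).ncard := Set.ncard_le_ncard hCAB (Set.toFinite _)
  have hfin : B.ncard = T.ncard := hBmax T hTA (by omega) (by omega)
  omega

lemma hall {A B : Set V} (hcond : ∀ S ⊆ A, oc G (A \ S) ≤ S.ncard) (hBA : B ⊆ A)
    (hallodd : ∀ c : (G.induce (A \ B)).ConnectedComponent, Odd (Nat.card c.supp)) :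
    ∃ f : (G.induce (A \ B)).ConnectedComponent → V, Injective f ∧
      ∀ d, f d ∈ B ∧ ∃ x ∈ Subtype.val '' d.supp, G.Adj x (f d) := by
  classical
  set t : (G.induce (A \ B)).ConnectedComponent → Finset V := fun d =>
    (Set.toFinite (B ∩ {b | ∃ x ∈ Subtype.val '' d.supp, G.Adj x b})).toFinset with ht
  have hmem : ∀ d b, b ∈ t d ↔ b ∈ B ∧ ∃ x ∈ Subtype.val '' d.supp, G.Adj x b := by
    intro d b
    rw [ht, Set.Finite.mem_toFinset, Set.mem_inter_iff, Set.mem_setOf_eq]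
  have hhall : ∀ s : Finset (G.induce (A \ B)).ConnectedComponent,
      s.card ≤ (s.biUnion t).card := by
    intro s
    set N : Set V := ↑(s.biUnion t) with hN
    have hNB : N ⊆ B := by
      intro b hb
      rw [hN, Finset.mem_coe, Finset.mem_biUnion] at hb
      obtain ⟨d, _, hd⟩ := hb
      exact ((hmem d b).mp hd).1
    have hNA : N ⊆ A := hNB.trans hBA
    have hsub : A \ B ⊆ A \ N := fun x hx => ⟨hx.1, fun hxN => hx.2 (hNB hxN)⟩
    have htrans : ∀ d : {d // d ∈ s}, ∃ d' : (G.induce (A \ N)).ConnectedComponent,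
        Odd (Nat.card d'.supp) ∧ Subtype.val '' d'.supp = Subtype.val '' d.1.supp := by
      rintro ⟨d, hds⟩
      have hcl : ∀ x y, x ∈ Subtype.val '' d.supp → y ∈ A \ N → G.Adj x y →
          y ∈ Subtype.val '' d.supp := by
        intro x y hx hy hadj
        by_cases hyB : y ∈ B
        · exfalso
          apply hy.2
          rw [hN, Finset.mem_coe]
          exact Finset.mem_biUnion.mpr ⟨d, hds, (hmem d y).mpr ⟨hyB, x, hx, hadj⟩⟩
        · exact comp_closed d hx ⟨hy.1, hyB⟩ hadj
      obtain ⟨d', hd'⟩ := comp_transfer hsub d hcl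
      exact ⟨d', by rw [card_supp_eq_of_image hd']; exact hallodd d, hd'⟩
    choose g hgodd hgim using htrans
    have hginj : Injective (fun d => (⟨g d, hgodd d⟩ :
        {c' : (G.induce (A \ N)).ConnectedComponent // Odd (Nat.card c'.supp)})) := by
      intro d e h
      have : g d = g e := congrArg Subtype.val h
      exact Subtype.ext (supp_eq_iff ((hgim d).symm.trans (this ▸ hgim e)))
    have hcard := Nat.card_le_card_of_injective _ hginj
    have h1 : Nat.card {d // d ∈ s} = s.card := by
      rw [Nat.card_eq_fintype_card, Fintype.card_coe]
    have h2 : oc G (A \ N) ≤ N.ncard := hcond N hNA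
    have h3 : N.ncard = (s.biUnion t).card := Set.ncard_coe_finset _
    have h4 : Nat.card {c' : (G.induce (A \ N)).ConnectedComponent // Odd (Nat.card c'.supp)}
        = oc G (A \ N) := rfl
    omega
  obtain ⟨f, hfinj, hft⟩ := (Finset.all_card_le_biUnion_card_iff_exists_injective t).mp hhall
  exact ⟨f, hfinj, fun d => ⟨((hmem d (f d)).mp (hft d)).1, ((hmem d (f d)).mp (hft d)).2⟩⟩

theorem tutte_rel : ∀ (n : ℕ) (A : Set V), A.ncard ≤ n →
    (∀ S ⊆ A, oc G (A \ S) ≤ S.ncard) → ∃ M, Mon G A M := by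
  intro n
  induction n with
  | zero =>
    intro A hA _
    have hAe : A = ∅ := by
      rw [← Set.ncard_eq_zero (Set.toFinite _)]; omega
    subst hAe
    exact ⟨∅, fun e he => absurd he (Set.notMem_empty e),
      fun e he => absurd he (Set.notMem_empty e), fun v hv => absurd hv (Set.notMem_empty v)⟩
  | succ n ih =>
    intro A hA hcond
    classical
    have hfam : (∅ : Set V) ∈ {B : Set V | B ⊆ A ∧ oc G (A \ B) = B.ncard} := by
      refine ⟨Set.empty_subset A, ?_⟩
      have h1 := hcond ∅ (Set.empty_subset A)
      simp only [Set.ncard_empty] at h1 ⊢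
      omega
    obtain ⟨B, hBmem, hBmax'⟩ := Set.Finite.exists_maximalFor Set.ncard
      {B : Set V | B ⊆ A ∧ oc G (A \ B) = B.ncard} (Set.toFinite _) ⟨∅, hfam⟩
    obtain ⟨hBA, hBbar⟩ := hBmem
    have hBmax : ∀ B', B' ⊆ A → oc G (A \ B') = B'.ncard → B.ncard ≤ B'.ncard →
        B.ncard = B'.ncard := fun B' h1 h2 h3 => le_antisymm h3 (hBmax' ⟨h1, h2⟩ h3)
    have hallodd := allodd hcond hBA hBbar hBmax
    obtain ⟨f, hfinj, hf⟩ := hall hcond hBA hallodd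
    have hx := fun d : (G.induce (A \ B)).ConnectedComponent => (hf d).2
    choose x₀ hx₀mem hx₀adj using hx
    have hfB : ∀ d, f d ∈ B := fun d => (hf d).1
    have hMd : ∀ d : (G.induce (A \ B)).ConnectedComponent,
        ∃ M, Mon G (Subtype.val '' d.supp \ {x₀ d}) M := by
      intro d
      apply ih
      · have h1 : (Subtype.val '' d.supp \ {x₀ d}).ncard
            = (Subtype.val '' d.supp).ncard - 1 :=
          Set.ncard_diff_singleton_of_mem (hx₀mem d)
        have h2 : (Subtype.val '' d.supp).ncard ≤ A.ncard :=
          Set.ncard_le_ncard ((supp_sub d).trans (fun x hx => hx.1)) (Set.toFinite _)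
        have h3 : 1 ≤ (Subtype.val '' d.supp).ncard :=
          (Set.ncard_pos (Set.toFinite _)).mpr (supp_nonempty d)
        omega
      · intro S hS
        exact tutteS hcond hBA hBbar hBmax d (hx₀mem d) hS
    choose Md hMdm using hMd
    have hccount := count hBbar hallodd
    have hfsurj : ∀ b ∈ B, ∃ d, f d = b := by
      have hbij : Bijective (fun d => (⟨f d, hfB d⟩ : B)) := by
        rw [Nat.bijective_iff_injective_and_card]
        exact ⟨fun d e h => hfinj (congrArg Subtype.val h),
          by rw [Nat.card_coe_set_eq, hccount]⟩
      intro b hb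
      obtain ⟨d, hd⟩ := hbij.2 ⟨b, hb⟩
      exact ⟨d, congrArg Subtype.val hd⟩
    set M : Set (Sym2 V) := (⋃ d, insert s(x₀ d, f d) (Md d)) with hM
    have hmemM : ∀ e, e ∈ M ↔ ∃ d, e = s(x₀ d, f d) ∨ e ∈ Md d := by
      intro e
      rw [hM, Set.mem_iUnion]
      simp only [Set.mem_insert_iff]
    have hx₀AB : ∀ d, x₀ d ∈ A \ B := fun d => supp_sub d (hx₀mem d)
    have hMdA : ∀ d, ∀ e ∈ Md d, ∀ v ∈ e, v ∈ Subtype.val '' d.supp \ {x₀ d} :=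
      fun d => (hMdm d).2.1
    refine ⟨M, ?_, ?_, ?_⟩
    · intro e he
      rw [hmemM] at he
      obtain ⟨d, he | he⟩ := he
      · rw [he, G.mem_edgeSet]
        exact hx₀adj d
      · exact (hMdm d).1 he
    · intro e he v hv
      rw [hmemM] at he
      obtain ⟨d, he | he⟩ := he
      · subst he
        rcases Sym2.mem_iff.mp hv with rfl | rfl
        · exact (hx₀AB d).1
        · exact hBA (hfB d)
      · exact (supp_sub d (hMdA d e he v hv).1).1
    · intro v hv
      by_cases hvB : v ∈ B
      · obtain ⟨d₀, hd₀⟩ := hfsurj v hvB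
        refine ⟨s(x₀ d₀, f d₀), ⟨(hmemM _).mpr ⟨d₀, Or.inl rfl⟩, hd₀ ▸ Sym2.mem_mk_right _ _⟩, ?_⟩
        rintro e ⟨heM, hve⟩
        rw [hmemM] at heM
        obtain ⟨d, he | he⟩ := heM
        · subst he
          rcases Sym2.mem_iff.mp hve with rfl | h
          · exact absurd hvB (hx₀AB d).2
          · have hdd : d = d₀ := hfinj (by rw [← h, hd₀])
            rw [hdd]
        · exact absurd hvB (supp_sub d (hMdA d e he v hve).1).2
      · have hvAB : v ∈ A \ B := ⟨hv, hvB⟩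
        set d₀ := (G.induce (A \ B)).connectedComponentMk ⟨v, hvAB⟩ with hd₀
        have hvim : v ∈ Subtype.val '' d₀.supp :=
          ⟨⟨v, hvAB⟩, by rw [ConnectedComponent.mem_supp_iff], rfl⟩
        by_cases hvx : v = x₀ d₀
        · refine ⟨s(x₀ d₀, f d₀), ⟨(hmemM _).mpr ⟨d₀, Or.inl rfl⟩, hvx ▸ Sym2.mem_mk_left _ _⟩, ?_⟩
          rintro e ⟨heM, hve⟩
          rw [hmemM] at heM
          obtain ⟨d, he | he⟩ := heM
          · subst he
            rcases Sym2.mem_iff.mp hve with h | h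
            · have hdd : d = d₀ := comp_eq_of_common (h ▸ hx₀mem d) hvim
              rw [hdd]
            · exact absurd (h ▸ hfB d) hvB
          · exfalso
            have h1 := hMdA d e he v hve
            have hdd : d = d₀ := comp_eq_of_common h1.1 hvim
            exact h1.2 (by rw [hdd, ← hvx]; exact rfl)
        · have hvin : v ∈ Subtype.val '' d₀.supp \ {x₀ d₀} := ⟨hvim, hvx⟩
          obtain ⟨e₀, ⟨he₀M, he₀v⟩, he₀u⟩ := (hMdm d₀).2.2 v hvin
          refine ⟨e₀, ⟨(hmemM _).mpr ⟨d₀, Or.inr he₀M⟩, he₀v⟩, ?_⟩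
          rintro e ⟨heM, hve⟩
          rw [hmemM] at heM
          obtain ⟨d, he | he⟩ := heM
          · exfalso
            subst he
            rcases Sym2.mem_iff.mp hve with h | h
            · have hdd : d = d₀ := comp_eq_of_common (h ▸ hx₀mem d) hvim
              exact hvx (by rw [hdd] at h; exact h)
            · exact hvB (h ▸ hfB d)
          · have hdd : d = d₀ := comp_eq_of_common (hMdA d e he v hve).1 hvim
            exact he₀u e ⟨hdd ▸ he, hve⟩

end TutteAux

section Final

open TutteAux

variable {V : Type*} [Fintype V]

lemma isPM_iff_mon {G : SimpleGraph V} {M : Set (Sym2 V)} :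
    IsPM G M ↔ Mon G Set.univ M := by
  constructor
  · rintro ⟨h1, h2⟩
    exact ⟨h1, fun e _ v _ => Set.mem_univ v, fun v _ => h2 v⟩
  · rintro ⟨h1, _, h3⟩
    exact ⟨h1, fun v => h3 v (Set.mem_univ v)⟩

lemma numOdd_eq_oc (G : SimpleGraph V) (B : Set V) :
    numOddComponents G B = oc G (Set.univ \ B) := by
  rw [show Set.univ \ B = (Bᶜ : Set V) from (Set.compl_eq_univ_diff B).symm]
  rfl

theorem stmt3' {V : Type*} [Fintype V] (G : SimpleGraph V)
    (hc : G.Connected) (hM : ∃ M, IsPM G M) :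
    (∀ e ∈ G.edgeSet, ∃ M, IsPM G M ∧ e ∈ M) ↔
      ∀ B : Set V, IsBarrier G B → ∀ u ∈ B, ∀ w ∈ B, ¬ G.Adj u w := by
  classical
  constructor
  · -- matching covered → barriers stable
    intro hmc B hB u hu w hw hadj
    obtain ⟨M, hMpm, hMe⟩ := hmc s(u, w) ((G.mem_edgeSet).mpr hadj)
    have hMon : Mon G Set.univ M := isPM_iff_mon.mp hMpm
    obtain ⟨f, hfinj, hf⟩ := exists_inj hMon (Set.subset_univ B)
    have huw : u ≠ w := hadj.ne
    have hclaim : ∀ c, f c ∉ ({u, w} : Set V) := by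
      intro c hcu
      obtain ⟨hcB, x, hxim, hxM⟩ := hf c
      have hxnB : x ∉ B := (supp_sub c.1 hxim).2
      rcases hcu with h | h
      · -- f c = u
        obtain ⟨w', hw'M, _, _, huniq⟩ := hMon.partner (Set.mem_univ u)
        have h1 : w = w' := huniq w hMe
        have h2 : x = w' := huniq x (by rwa [h, Sym2.eq_swap] at hxM)
        exact hxnB (h2 ▸ h1 ▸ hw)
      · -- f c = w
        obtain ⟨w', hw'M, _, _, huniq⟩ := hMon.partner (Set.mem_univ w)
        have h1 : u = w' := huniq u (Sym2.eq_swap ▸ hMe)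
        have h2 : x = w' := huniq x (by rwa [h, Sym2.eq_swap] at hxM)
        exact hxnB (h2 ▸ h1 ▸ hu)
    have hcard : oc G (Set.univ \ B) ≤ (B \ {u, w}).ncard := by
      rw [oc, ← Nat.card_coe_set_eq]
      exact Nat.card_le_card_of_injective
        (fun c => (⟨f c, (hf c).1, hclaim c⟩ : (B \ {u, w} : Set V)))
        (fun c d h => hfinj (congrArg Subtype.val h))
    have hpair : ({u, w} : Set V) ⊆ B := Set.insert_subset hu (Set.singleton_subset_iff.mpr hw)
    have h2 : (B \ {u, w}).ncard = B.ncard - 2 := by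
      rw [Set.ncard_diff hpair (Set.toFinite _), Set.ncard_pair huw]
    have h3 : 2 ≤ B.ncard := by
      have := Set.ncard_le_ncard hpair (Set.toFinite _)
      rwa [Set.ncard_pair huw] at this
    have hbar : oc G (Set.univ \ B) = B.ncard := by
      rw [← numOdd_eq_oc]; exact hB
    omega
  · -- barriers stable → matching covered
    intro hstab e he
    induction e with
    | _ u v =>
    have hadj : G.Adj u v := (G.mem_edgeSet).mp he
    obtain ⟨M₀, hM₀⟩ := hM
    have hMon₀ : Mon G Set.univ M₀ := isPM_iff_mon.mp hM₀
    set A : Set V := Set.univ \ {u, v} with hA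
    by_cases hcnd : ∀ S ⊆ A, oc G (A \ S) ≤ S.ncard
    · obtain ⟨M', hM'⟩ := tutte_rel A.ncard A le_rfl hcnd
      have hends : ∀ e' ∈ M', ∀ x ∈ e', x ∈ A := hM'.2.1
      refine ⟨insert s(u, v) M', ⟨?_, ?_⟩, Set.mem_insert _ _⟩
      · intro e' he'
        rcases he' with rfl | he'
        · exact he
        · exact hM'.1 he'
      · intro x
        by_cases hx : x ∈ ({u, v} : Set V)
        · refine ⟨s(u, v), ⟨Set.mem_insert _ _, ?_⟩, ?_⟩
          · rcases hx with rfl | rfl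
            · exact Sym2.mem_mk_left _ _
            · exact Sym2.mem_mk_right _ _
          · rintro e' ⟨he'M, hxe'⟩
            rcases he'M with rfl | he'M
            · rfl
            · exact absurd hx (hends e' he'M x hxe').2
        · have hxA : x ∈ A := ⟨Set.mem_univ x, hx⟩
          obtain ⟨e₀, ⟨he₀M, he₀x⟩, he₀u⟩ := hM'.2.2 x hxA
          refine ⟨e₀, ⟨Set.mem_insert_of_mem _ he₀M, he₀x⟩, ?_⟩
          rintro e' ⟨he'M, hxe'⟩
          rcases he'M with rfl | he'M
          · exact absurd (Sym2.mem_iff.mp hxe') hx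
          · exact he₀u e' ⟨he'M, hxe'⟩
    · push_neg at hcnd
      obtain ⟨S, hSA, hbad⟩ := hcnd
      exfalso
      set B : Set V := {u, v} ∪ S with hB
      have hBc : Set.univ \ B = A \ S := by
        ext x; simp only [hB, hA, Set.mem_diff, Set.mem_union, Set.mem_univ, true_and]; tauto
      have hdisj : Disjoint ({u, v} : Set V) S := by
        rw [Set.disjoint_left]
        exact fun a ha haS => (hSA haS).2 ha
      have hBn : B.ncard = S.ncard + 2 := by
        rw [hB, Set.ncard_union_eq hdisj (Set.toFinite _) (Set.toFinite _),
          Set.ncard_pair hadj.ne]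
        ring
      have heasy : oc G (Set.univ \ B) ≤ B.ncard := by
        have := oc_le hMon₀ (Set.subset_univ B)
        exact this
      have hpar : oc G (Set.univ \ B) % 2 = (Set.univ \ B).ncard % 2 := parity G _
      have huniv : (Set.univ \ B).ncard = (Set.univ : Set V).ncard - B.ncard :=
        Set.ncard_diff (Set.subset_univ B) (Set.toFinite _)
      have hBuniv : B.ncard ≤ (Set.univ : Set V).ncard :=
        Set.ncard_le_ncard (Set.subset_univ B) (Set.toFinite _)
      have heven : (Set.univ : Set V).ncard % 2 = 0 := even_card_of_mon hMon₀
      have hocB : oc G (Set.univ \ B) = oc G (A \ S) := by rw [hBc]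
      have hbar : IsBarrier G B := by
        have : oc G (Set.univ \ B) = B.ncard := by omega
        rw [IsBarrier, numOdd_eq_oc]
        exact this
      exact hstab B hbar u (Or.inl (Or.inl rfl)) v (Or.inl (Or.inr rfl)) hadj

end Final

/-- A connected graph with a perfect matching is matching covered iff every
barrier is a stable set. -/
theorem stmt3 {V : Type*} [Fintype V] (G : SimpleGraph V)
    (hc : G.Connected) (hM : ∃ M, IsPM G M) :
    (∀ e ∈ G.edgeSet, ∃ M, IsPM G M ∧ e ∈ M) ↔
      ∀ B : Set V, IsBarrier G B → ∀ u ∈ B, ∀ w ∈ B, ¬ G.Adj u w :=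
  stmt3' G hc hM
end

section
/- In a bipartite matching covered graph, every separating cut is a tight cut. -/
open SimpleGraph

/-- Crossing edges whose `X`-endpoint lies in `A`. -/
def cutP {V : Type*} (G : SimpleGraph V) (A X : Set V) : Set (Sym2 V) :=
  {e | ∃ x y, e = s(x, y) ∧ G.Adj x y ∧ x ∈ X ∧ y ∉ X ∧ x ∈ A}

/-- Edges with both endpoints in `X`. -/
def inSet {V : Type*} (X : Set V) : Set (Sym2 V) :=
  {e | ∃ x y, e = s(x, y) ∧ x ∈ X ∧ y ∈ X}

lemma cutP_not_inSet {V : Type*} {G : SimpleGraph V} {A X : Set V} {e : Sym2 V}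
    (h : e ∈ cutP G A X) : e ∉ inSet X := by
  obtain ⟨x, y, rfl, _, hx, hy, _⟩ := h
  rintro ⟨u, v, huv, hu, hv⟩
  rw [Sym2.eq_iff] at huv
  rcases huv with ⟨rfl, rfl⟩ | ⟨rfl, rfl⟩ <;> exact hy (by assumption)

lemma cutP_not_compl {V : Type*} {G : SimpleGraph V} {A X : Set V} {e : Sym2 V}
    (h : e ∈ cutP G A X) : e ∉ cutP G Aᶜ X := by
  obtain ⟨x, y, rfl, _, hx, hy, hxA⟩ := h
  rintro ⟨u, v, huv, _, hu, hv, huA⟩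
  rw [Sym2.eq_iff] at huv
  rcases huv with ⟨rfl, rfl⟩ | ⟨rfl, rfl⟩
  · exact huA hxA
  · exact hy hu

lemma cutP_subset_edgeCut {V : Type*} {G : SimpleGraph V} {A X : Set V} :
    cutP G A X ⊆ edgeCut G X := by
  rintro e ⟨x, y, rfl, hadj, hx, hy, _⟩
  exact ⟨hadj, x, y, rfl, hx, hy⟩

lemma mem_split {V : Type*} {G : SimpleGraph V} {e : Sym2 V} {v : V}
    (he : e ∈ G.edgeSet) (hv : v ∈ e) : ∃ w, e = s(v, w) ∧ G.Adj v w := by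
  induction e with
  | _ a b =>
    rw [Sym2.mem_iff] at hv
    rw [SimpleGraph.mem_edgeSet] at he
    rcases hv with rfl | rfl
    · exact ⟨b, rfl, he⟩
    · exact ⟨a, Sym2.eq_swap, he.symm⟩

/-- The key counting identity. -/
lemma count_lemma {V : Type*} [Fintype V] {G : SimpleGraph V} {A X : Set V}
    (hbip : ∀ u w : V, G.Adj u w → (u ∈ A ↔ w ∉ A)) {M : Set (Sym2 V)}
    (hM : IsPM G M) :
    (X ∩ A).ncard = (M ∩ cutP G A X).ncard + (M ∩ inSet X).ncard := by
  classical
  set g : V → Sym2 V := fun v => (hM.2 v).exists.choose with hg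
  have hg1 : ∀ v, g v ∈ M ∧ v ∈ g v := fun v => (hM.2 v).exists.choose_spec
  have hun : ∀ v e, e ∈ M → v ∈ e → e = g v :=
    fun v e he hv => (hM.2 v).unique ⟨he, hv⟩ (hg1 v)
  have hbij : Set.BijOn g (X ∩ A) ((M ∩ cutP G A X) ∪ (M ∩ inSet X)) := by
    refine ⟨?_, ?_, ?_⟩
    · rintro v ⟨hvX, hvA⟩
      obtain ⟨hgM, hvg⟩ := hg1 v
      obtain ⟨w, hw, hadj⟩ := mem_split (hM.1 hgM) hvg
      by_cases hwX : w ∈ X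
      · exact Or.inr ⟨hgM, v, w, hw, hvX, hwX⟩
      · exact Or.inl ⟨hgM, v, w, hw, hadj, hvX, hwX, hvA⟩
    · rintro u ⟨huX, huA⟩ v ⟨hvX, hvA⟩ hguv
      obtain ⟨hguM, hug⟩ := hg1 u
      obtain ⟨w, hw, hadj⟩ := mem_split (hM.1 hguM) hug
      have hvmem : v ∈ g u := hguv ▸ (hg1 v).2
      rw [hw, Sym2.mem_iff] at hvmem
      rcases hvmem with rfl | rfl
      · rfl
      · exact absurd hvA ((hbip u v hadj).mp huA)
    · rintro e (⟨heM, x, y, rfl, hadj, hx, hy, hxA⟩ | ⟨heM, x, y, rfl, hx, hy⟩)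
      · exact ⟨x, ⟨hx, hxA⟩, (hun x _ heM (Sym2.mem_mk_left x y)).symm⟩
      · have hadj : G.Adj x y := G.mem_edgeSet.mp (hM.1 heM)
        by_cases hxA : x ∈ A
        · exact ⟨x, ⟨hx, hxA⟩, (hun x _ heM (Sym2.mem_mk_left x y)).symm⟩
        · have hyA : y ∈ A := by
            by_contra hyA
            exact hxA ((hbip x y hadj).mpr hyA)
          exact ⟨y, ⟨hy, hyA⟩, (hun y _ heM (Sym2.mem_mk_right x y)).symm⟩
  have hdisj : Disjoint (M ∩ cutP G A X) (M ∩ inSet X) :=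
    Set.disjoint_left.mpr fun e he1 he2 => cutP_not_inSet he1.2 he2.2
  calc (X ∩ A).ncard = (g '' (X ∩ A)).ncard :=
        (Set.ncard_image_of_injOn hbij.injOn).symm
    _ = ((M ∩ cutP G A X) ∪ (M ∩ inSet X)).ncard := by rw [hbij.image_eq]
    _ = (M ∩ cutP G A X).ncard + (M ∩ inSet X).ncard :=
        Set.ncard_union_eq hdisj (Set.toFinite _) (Set.toFinite _)

lemma cut_split {V : Type*} {G : SimpleGraph V} {A X : Set V} {M : Set (Sym2 V)}
    (hM : M ⊆ G.edgeSet) :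
    M ∩ edgeCut G X = (M ∩ cutP G A X) ∪ (M ∩ cutP G Aᶜ X) := by
  ext e
  constructor
  · rintro ⟨heM, hes, x, y, rfl, hx, hy⟩
    have hadj : G.Adj x y := G.mem_edgeSet.mp hes
    by_cases hxA : x ∈ A
    · exact Or.inl ⟨heM, x, y, rfl, hadj, hx, hy, hxA⟩
    · exact Or.inr ⟨heM, x, y, rfl, hadj, hx, hy, hxA⟩
  · rintro (⟨heM, he⟩ | ⟨heM, he⟩) <;>
      exact ⟨heM, cutP_subset_edgeCut he⟩

lemma cut_ncard_split {V : Type*} [Fintype V] {G : SimpleGraph V} {A X : Set V}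
    {M : Set (Sym2 V)} (hM : M ⊆ G.edgeSet) :
    (M ∩ edgeCut G X).ncard = (M ∩ cutP G A X).ncard + (M ∩ cutP G Aᶜ X).ncard := by
  rw [cut_split (A := A) hM]
  exact Set.ncard_union_eq
    (Set.disjoint_left.mpr fun e he1 he2 => cutP_not_compl he1.2 he2.2)
    (Set.toFinite _) (Set.toFinite _)

/-- In a bipartite matching covered graph, every separating cut is tight. -/
theorem stmt13 {V : Type*} [Fintype V] (G : SimpleGraph V)
    (hG : MatchingCovered G) (A : Set V)
    (hbip : ∀ u w : V, G.Adj u w → (u ∈ A ↔ w ∉ A))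
    (X : Set V) (hsep : SeparatingCut G X) :
    TightCut G X := by
  classical
  have hbip' : ∀ u w : V, G.Adj u w → (u ∈ Aᶜ ↔ w ∉ Aᶜ) := by
    intro u w h
    have := hbip u w h
    simp only [Set.mem_compl_iff]
    tauto
  -- the key identity, for every perfect matching N
  have key : ∀ N, IsPM G N →
      (X ∩ A).ncard + (N ∩ cutP G Aᶜ X).ncard
        = (X ∩ Aᶜ).ncard + (N ∩ cutP G A X).ncard := by
    intro N hN
    have h1 := count_lemma hbip hN (X := X)
    have h2 := count_lemma hbip' hN (X := X)
    omega
  intro M hM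
  -- get some edge of M, hence some matching meeting the cut once
  have hV : Nonempty V := by
    have h2 := hG.2.1
    have : 0 < Nat.card V := by omega
    exact Nat.card_pos_iff.mp this |>.1
  obtain ⟨v⟩ := hV
  obtain ⟨e0, ⟨he0M, -⟩, -⟩ := hM.2 v
  obtain ⟨M0, hM0, -, hM0cut⟩ := hsep e0 (hM.1 he0M)
  -- abbreviations
  set a := (X ∩ A).ncard with ha
  set b := (X ∩ Aᶜ).ncard with hb
  have hsplit0 := cut_ncard_split (A := A) (X := X) hM0.1
  have hkey0 := key M0 hM0
  have hsplitM := cut_ncard_split (A := A) (X := X) hM.1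
  have hkeyM := key M hM
  rw [hM0cut] at hsplit0
  rw [hsplitM]
  -- from M0: either a = b + 1 or b = a + 1
  have hab : a = b + 1 ∨ b = a + 1 := by omega
  -- a helper: for any crossing edge of the "wrong" type we get a contradiction
  rcases hab with hab | hab
  · -- a = b + 1 : show M has no Aᶜ-type crossing edges
    have hzero : (M ∩ cutP G Aᶜ X).ncard = 0 := by
      by_contra h0
      obtain ⟨e, heM, he⟩ := Set.nonempty_of_ncard_ne_zero h0
      obtain ⟨x, y, hexy, hadj, hx, hy, hxA⟩ := he
      have heE : e ∈ G.edgeSet := by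
        rw [hexy, SimpleGraph.mem_edgeSet]; exact hadj
      obtain ⟨M', hM', heM', hM'cut⟩ := hsep e heE
      have heC : e ∈ M' ∩ edgeCut G X :=
        ⟨heM', cutP_subset_edgeCut ⟨x, y, hexy, hadj, hx, hy, hxA⟩⟩
      obtain ⟨f, hf⟩ := Set.ncard_eq_one.mp hM'cut
      have hef : e = f := by rw [hf] at heC; exact heC
      subst hef
      have hPempty : M' ∩ cutP G A X = ∅ := by
        apply Set.eq_empty_iff_forall_notMem.mpr
        intro e' he'
        have he'C : e' ∈ M' ∩ edgeCut G X := ⟨he'.1, cutP_subset_edgeCut he'.2⟩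
        rw [hf] at he'C
        rw [he'C] at he'
        exact cutP_not_compl he'.2 ⟨x, y, hexy, hadj, hx, hy, hxA⟩
      have hNpos : 1 ≤ (M' ∩ cutP G Aᶜ X).ncard := by
        have : e ∈ M' ∩ cutP G Aᶜ X := ⟨heM', x, y, hexy, hadj, hx, hy, hxA⟩
        have := Set.ncard_pos (Set.toFinite _) |>.mpr ⟨e, this⟩
        omega
      have hkey' := key M' hM'
      rw [hPempty] at hkey'
      simp only [Set.ncard_empty] at hkey'
      omega
    omega
  · -- b = a + 1 : show M has no A-type crossing edges
    have hzero : (M ∩ cutP G A X).ncard = 0 := by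
      by_contra h0
      obtain ⟨e, heM, he⟩ := Set.nonempty_of_ncard_ne_zero h0
      obtain ⟨x, y, hexy, hadj, hx, hy, hxA⟩ := he
      have heE : e ∈ G.edgeSet := by
        rw [hexy, SimpleGraph.mem_edgeSet]; exact hadj
      obtain ⟨M', hM', heM', hM'cut⟩ := hsep e heE
      have heC : e ∈ M' ∩ edgeCut G X :=
        ⟨heM', cutP_subset_edgeCut ⟨x, y, hexy, hadj, hx, hy, hxA⟩⟩
      obtain ⟨f, hf⟩ := Set.ncard_eq_one.mp hM'cut
      have hef : e = f := by rw [hf] at heC; exact heC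
      subst hef
      have hPempty : M' ∩ cutP G Aᶜ X = ∅ := by
        apply Set.eq_empty_iff_forall_notMem.mpr
        intro e' he'
        have he'C : e' ∈ M' ∩ edgeCut G X := ⟨he'.1, cutP_subset_edgeCut he'.2⟩
        rw [hf] at he'C
        rw [he'C] at he'
        exact cutP_not_compl ⟨x, y, hexy, hadj, hx, hy, hxA⟩ he'.2
      have hNpos : 1 ≤ (M' ∩ cutP G A X).ncard := by
        have : e ∈ M' ∩ cutP G A X := ⟨heM', x, y, hexy, hadj, hx, hy, hxA⟩
        have := Set.ncard_pos (Set.toFinite _) |>.mpr ⟨e, this⟩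
        omega
      have hkey' := key M' hM'
      rw [hPempty] at hkey'
      simp only [Set.ncard_empty] at hkey'
      omega
    omega
end

section
/- Let G be a matching covered graph with a 2-separation {u, v} (a vertex cut of size two that is not a barrier), and let S be the union of vertex sets of a nonempty proper subset of the components of G − u − v. Then ∂(S ∪ {u}) is a tight cut of G. -/
open SimpleGraph

/-! ### Auxiliary lemmas -/

lemma even_nat_card_of_involutive {α : Type*} [Finite α] {f : α → α}
    (hinv : Function.Involutive f) (hfix : ∀ a, f a ≠ a) : Even (Nat.card α) := by
  classical
  have : Fintype α := Fintype.ofFinite α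
  set g : Function.End α := f with hg
  have hf : g ^ 2 ^ 1 = 1 := by
    show f^[2 ^ 1] = id
    exact hinv.iterate_even (by norm_num)
  have h := Equiv.Perm.card_fixedPoints_modEq (f := g) hf
  have hfp : IsEmpty (Function.fixedPoints g) := by
    constructor
    rintro ⟨a, ha⟩
    exact hfix a ha
  have h2 : Fintype.card (Function.fixedPoints g) = 0 := @Fintype.card_eq_zero _ _ hfp
  rw [h2] at h
  rw [Nat.card_eq_fintype_card]
  exact (even_iff_two_dvd).mpr (Nat.modEq_zero_iff_dvd.mp h)

lemma IsPM.exists_partner {V : Type*} {G : SimpleGraph V} {M : Set (Sym2 V)}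
    (h : IsPM G M) :
    ∃ m : V → V, (∀ x, G.Adj x (m x)) ∧ (∀ x, s(x, m x) ∈ M) ∧
      (∀ x, ∀ e ∈ M, x ∈ e → e = s(x, m x)) := by
  have hx : ∀ x : V, ∃ y : V, s(x, y) ∈ M := by
    intro x
    obtain ⟨e, ⟨heM, hxe⟩, -⟩ := h.2 x
    obtain ⟨y, rfl⟩ := Sym2.mem_iff_exists.mp hxe
    exact ⟨y, heM⟩
  choose m hm using hx
  refine ⟨m, fun x => ?_, hm, fun x e heM hxe => ?_⟩
  · exact (G.mem_edgeSet).mp (h.1 (hm x))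
  · obtain ⟨e', -, hu⟩ := h.2 x
    rw [hu e ⟨heM, hxe⟩, hu s(x, m x) ⟨hm x, Sym2.mem_mk_left x (m x)⟩]

lemma IsPM.partner_invol {V : Type*} {G : SimpleGraph V} {M : Set (Sym2 V)}
    (h : IsPM G M) {m : V → V} (hadj : ∀ x, G.Adj x (m x)) (hmem : ∀ x, s(x, m x) ∈ M)
    (huniq : ∀ x, ∀ e ∈ M, x ∈ e → e = s(x, m x)) : ∀ x, m (m x) = x := by
  intro x
  have h1 := huniq (m x) s(x, m x) (hmem x) (Sym2.mem_mk_right x (m x))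
  rw [Sym2.eq_iff] at h1
  rcases h1 with ⟨h1, -⟩ | ⟨h1, -⟩
  · exact absurd h1 (hadj x).ne
  · exact h1.symm

lemma IsPM.ncard_cut_mod_two {V : Type*} [Fintype V] {G : SimpleGraph V} {M : Set (Sym2 V)}
    (h : IsPM G M) (X : Set V) :
    (M ∩ edgeCut G X).ncard % 2 = X.ncard % 2 := by
  classical
  obtain ⟨m, hadj, hmem, huniq⟩ := h.exists_partner
  have hinv := h.partner_invol hadj hmem huniq
  set A : Set V := {x | x ∈ X ∧ m x ∈ X} with hA
  set Bs : Set V := {x | x ∈ X ∧ m x ∉ X} with hBs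
  have hXu : X = A ∪ Bs := by
    ext x; by_cases hx : m x ∈ X <;> simp [hA, hBs, hx]
  have hdisj : Disjoint A Bs := by
    rw [Set.disjoint_left]
    rintro x ⟨-, hx⟩ ⟨-, hx'⟩
    exact hx' hx
  have hcard : X.ncard = A.ncard + Bs.ncard := by
    rw [hXu]; exact Set.ncard_union_eq hdisj (Set.toFinite A) (Set.toFinite Bs)
  have hAeven : Even A.ncard := by
    rw [← Nat.card_coe_set_eq]
    refine even_nat_card_of_involutive (f := fun a : A => (⟨m a.1, a.2.2, by
      rw [hinv]; exact a.2.1⟩ : A)) (fun a => Subtype.ext (hinv a.1)) ?_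
    rintro ⟨a, ha⟩ hfa
    exact (hadj a).ne (congrArg Subtype.val hfa).symm
  have himg : (fun x => s(x, m x)) '' Bs = M ∩ edgeCut G X := by
    ext e
    constructor
    · rintro ⟨x, ⟨hxX, hmX⟩, rfl⟩
      exact ⟨hmem x, h.1 (hmem x), x, m x, rfl, hxX, hmX⟩
    · rintro ⟨heM, -, x, y, rfl, hxX, hyX⟩
      have := huniq x s(x, y) heM (Sym2.mem_mk_left x y)
      rw [Sym2.eq_iff] at this
      rcases this with ⟨-, h2⟩ | ⟨h1, -⟩
      · exact ⟨x, ⟨hxX, by rw [← h2]; exact hyX⟩, by rw [h2]⟩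
      · exact absurd h1 (hadj x).ne
  have hinj : Set.InjOn (fun x => s(x, m x)) Bs := by
    rintro x ⟨hxX, hxm⟩ y ⟨hyX, hym⟩ hxy
    simp only [Sym2.eq_iff] at hxy
    rcases hxy with ⟨h1, -⟩ | ⟨h1, -⟩
    · exact h1
    · exact absurd (h1 ▸ hxX) hym
  have hBcard : Bs.ncard = (M ∩ edgeCut G X).ncard := by
    rw [← himg]; exact (Set.ncard_image_of_injOn hinj).symm
  rw [Nat.even_iff] at hAeven
  omega

lemma card_comp_sum {α : Type*} [Fintype α] (H : SimpleGraph α)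
    (D : Finset H.ConnectedComponent) :
    Nat.card {a : α // H.connectedComponentMk a ∈ D} = ∑ c ∈ D, Nat.card c.supp := by
  classical
  have h1 : ∀ c : H.ConnectedComponent,
      Nat.card c.supp
        = (Finset.univ.filter (fun a => H.connectedComponentMk a = c)).card := by
    intro c
    rw [Nat.card_eq_fintype_card, ← Fintype.card_subtype]
    exact Fintype.card_congr (Equiv.subtypeEquivRight (fun a => c.mem_supp_iff a))
  rw [Nat.card_eq_fintype_card, Fintype.card_subtype]
  have h2 : (Finset.univ.filter (fun a => H.connectedComponentMk a ∈ D))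
      = D.biUnion (fun c => Finset.univ.filter (fun a => H.connectedComponentMk a = c)) := by
    ext a
    simp
  rw [h2, Finset.card_biUnion]
  · exact Finset.sum_congr rfl (fun c _ => (h1 c).symm)
  · intro c hc c' hc' hne
    rw [Function.onFun, Finset.disjoint_left]
    intro a ha ha'
    simp only [Finset.mem_filter] at ha ha'
    exact hne (ha.2 ▸ ha'.2 ▸ rfl)

lemma even_card_union_components {α : Type*} [Fintype α] (H : SimpleGraph α)
    (𝒟 : Set H.ConnectedComponent)
    (hev : ∀ c ∈ 𝒟, Even (Nat.card c.supp)) :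
    Even (Nat.card {a : α // H.connectedComponentMk a ∈ 𝒟}) := by
  classical
  have hfinD : 𝒟.Finite := Set.toFinite 𝒟
  have hcong : Nat.card {a : α // H.connectedComponentMk a ∈ 𝒟}
      = Nat.card {a : α // H.connectedComponentMk a ∈ hfinD.toFinset} := by
    exact Nat.card_congr (Equiv.subtypeEquivRight (fun a => hfinD.mem_toFinset.symm))
  rw [hcong, card_comp_sum]
  rw [Nat.even_iff, Finset.sum_nat_mod]
  have : ∀ c ∈ hfinD.toFinset, Nat.card c.supp % 2 = 0 := by
    intro c hc
    exact Nat.even_iff.mp (hev c (hfinD.mem_toFinset.mp hc))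
  rw [Finset.sum_congr rfl this]
  simp

lemma even_num_odd_components {α : Type*} [Fintype α] (H : SimpleGraph α)
    (h : Even (Nat.card α)) :
    Even (Nat.card {c : H.ConnectedComponent // Odd (Nat.card c.supp)}) := by
  classical
  have hfin : Finite H.ConnectedComponent := Quot.finite _
  have : Fintype H.ConnectedComponent := Fintype.ofFinite _
  have h0 : Nat.card {a : α // H.connectedComponentMk a ∈ (Finset.univ : Finset H.ConnectedComponent)} = Nat.card α := by
    exact Nat.card_congr (Equiv.subtypeUnivEquiv (fun a => Finset.mem_univ _))
  have h1 := card_comp_sum H (Finset.univ)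
  rw [h0] at h1
  have h2 : Even (∑ c : H.ConnectedComponent, Nat.card c.supp) := h1 ▸ h
  rw [Finset.even_sum_iff_even_card_odd] at h2
  rwa [Nat.card_eq_fintype_card, Fintype.card_subtype]

lemma mk_eq_of_adj {V : Type*} {B : Set V} {G : SimpleGraph V} {x y : V} (hadj : G.Adj x y)
    (hx : x ∈ Bᶜ) (hy : y ∈ Bᶜ) :
    (G.induce Bᶜ).connectedComponentMk ⟨x, hx⟩
      = (G.induce Bᶜ).connectedComponentMk ⟨y, hy⟩ := by
  have hadj' : (G.induce Bᶜ).Adj ⟨x, hx⟩ ⟨y, hy⟩ := by simpa using hadj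
  exact ConnectedComponent.eq.mpr hadj'.reachable

lemma exists_pm {V : Type*} [Fintype V] {G : SimpleGraph V}
    (hconn : G.Connected) (hcard : 2 ≤ Nat.card V)
    (hmc : ∀ e ∈ G.edgeSet, ∃ M, IsPM G M ∧ e ∈ M) : ∃ M, IsPM G M := by
  rw [Nat.card_eq_fintype_card] at hcard
  obtain ⟨a, b, hab⟩ := Fintype.exists_pair_of_one_lt_card hcard
  obtain ⟨w⟩ := hconn.preconnected a b
  cases w with
  | nil => exact absurd rfl hab
  | cons h p =>
    obtain ⟨M, hM, -⟩ := hmc _ ((G.mem_edgeSet).mpr h)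
    exact ⟨M, hM⟩

/-- For a 2-separation `{u, v}` of a matching covered graph and `S` the union of a
nonempty proper subset of the components of `G - u - v`, the cut `∂(S ∪ {u})` is
tight. -/
theorem stmt15 {V : Type*} [Fintype V] (G : SimpleGraph V)
    (hG : MatchingCovered G) (u v : V) (huv : u ≠ v)
    (hcut : ¬ (G.induce (({u, v} : Set V)ᶜ)).Connected)
    (hnb : ¬ IsBarrier G {u, v})
    (𝒞 : Set ((G.induce (({u, v} : Set V)ᶜ)).ConnectedComponent))
    (h1 : 𝒞.Nonempty) (h2 : 𝒞 ≠ Set.univ)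
    (S : Set V) (hS : S = ⋃ K ∈ 𝒞, Subtype.val '' K.supp) :
    TightCut G (S ∪ {u}) := by
  classical
  obtain ⟨hconn, hcard, hmc⟩ := hG
  have hSW : S ⊆ ({u, v} : Set V)ᶜ := by
    rw [hS]
    rintro x hx
    simp only [Set.mem_iUnion] at hx
    obtain ⟨K, hK, a, ha, rfl⟩ := hx
    exact a.2
  have hSmem : ∀ x : V, x ∈ S ↔ ∃ hx : x ∈ ({u, v} : Set V)ᶜ,
      (G.induce (({u, v} : Set V)ᶜ)).connectedComponentMk ⟨x, hx⟩ ∈ 𝒞 := by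
    intro x
    constructor
    · intro hx
      rw [hS] at hx
      simp only [Set.mem_iUnion] at hx
      obtain ⟨K, hK, a, ha, rfl⟩ := hx
      refine ⟨a.2, ?_⟩
      show (G.induce (({u, v} : Set V)ᶜ)).connectedComponentMk a ∈ 𝒞
      rw [(K.mem_supp_iff a).mp ha]
      exact hK
    · rintro ⟨hx, hK⟩
      rw [hS]
      simp only [Set.mem_iUnion]
      exact ⟨_, hK, ⟨x, hx⟩, (ConnectedComponent.mem_supp_iff _ _).mpr rfl, rfl⟩
  obtain ⟨M₀, hM₀⟩ := exists_pm hconn hcard hmc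
  obtain ⟨m₀, hadj₀, hmem₀, huniq₀⟩ := hM₀.exists_partner
  have hevenV : Even (Nat.card V) :=
    even_nat_card_of_involutive (hM₀.partner_invol hadj₀ hmem₀ huniq₀)
      (fun a => (hadj₀ a).ne')
  have hpair : ({u, v} : Set V).ncard = 2 := Set.ncard_pair huv
  have hWcard : Even ((({u, v} : Set V)ᶜ).ncard) := by
    have hc := Set.ncard_add_ncard_compl ({u, v} : Set V)
    rw [hpair] at hc
    rw [Nat.even_iff] at hevenV ⊢
    omega
  -- every component of `G - u - v` is even
  have hcompEven : ∀ K : (G.induce (({u, v} : Set V)ᶜ)).ConnectedComponent,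
      Even (Nat.card K.supp) := by
    have hnum_even : Even (Nat.card {c : (G.induce (({u, v} : Set V)ᶜ)).ConnectedComponent //
        Odd (Nat.card c.supp)}) := by
      refine even_num_odd_components _ ?_
      rwa [Nat.card_coe_set_eq]
    have key : ∀ c : (G.induce (({u, v} : Set V)ᶜ)).ConnectedComponent,
        Odd (Nat.card c.supp) →
        ∃ x y, s(x, y) ∈ M₀ ∧ x ∈ Subtype.val '' c.supp ∧ y ∈ ({u, v} : Set V) := by
      intro c hc
      have hXodd : Odd ((Subtype.val '' c.supp).ncard) := by
        rwa [Set.ncard_image_of_injective _ Subtype.val_injective,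
          ← Nat.card_coe_set_eq]
      have hmod := hM₀.ncard_cut_mod_two (Subtype.val '' c.supp)
      have hne : (M₀ ∩ edgeCut G (Subtype.val '' c.supp)).ncard ≠ 0 := by
        rw [Nat.odd_iff] at hXodd
        omega
      have hnonempty : (M₀ ∩ edgeCut G (Subtype.val '' c.supp)).Nonempty := by
        rw [Set.nonempty_iff_ne_empty]
        intro h0
        apply hne
        rw [h0, Set.ncard_empty]
      obtain ⟨e, heM, -, x, y, rfl, hx, hy⟩ := hnonempty
      refine ⟨x, y, heM, hx, ?_⟩
      by_contra hyB
      obtain ⟨a, ha, rfl⟩ := hx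
      have hadjxy : G.Adj (a : V) y := (G.mem_edgeSet).mp (hM₀.1 heM)
      have hmk := mk_eq_of_adj hadjxy a.2 hyB
      apply hy
      refine ⟨⟨y, hyB⟩, ?_, rfl⟩
      rw [ConnectedComponent.mem_supp_iff, ← hmk]
      exact (c.mem_supp_iff a).mp ha
    have key2 := fun (c : {c : (G.induce (({u, v} : Set V)ᶜ)).ConnectedComponent //
        Odd (Nat.card c.supp)}) => key c.1 c.2
    choose xf yf hfM hfx hfy using key2
    have hinj : Function.Injective
        (fun c : {c : (G.induce (({u, v} : Set V)ᶜ)).ConnectedComponent //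
          Odd (Nat.card c.supp)} => (⟨yf c, hfy c⟩ : ({u, v} : Set V))) := by
      rintro c c' hcc
      have hyy : yf c = yf c' := congrArg Subtype.val hcc
      have e1 := huniq₀ (yf c) _ (hfM c) (Sym2.mem_mk_right _ _)
      have e2 := huniq₀ (yf c') _ (hfM c') (Sym2.mem_mk_right _ _)
      rw [hyy] at e1
      have e3 : s(xf c, yf c') = s(xf c', yf c') := e1.trans e2.symm
      rw [Sym2.eq_iff] at e3
      rcases e3 with ⟨hxx, -⟩ | ⟨hxy, -⟩
      · obtain ⟨a, ha, hav⟩ := hfx c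
        obtain ⟨a', ha', hav'⟩ := hfx c'
        have haa : a = a' := Subtype.ext (by rw [hav, hav', hxx])
        apply Subtype.ext
        rw [← (ConnectedComponent.mem_supp_iff _ _).mp ha,
          ← (ConnectedComponent.mem_supp_iff _ _).mp ha', haa]
      · obtain ⟨a, ha, hav⟩ := hfx c
        have hxW : xf c ∈ ({u, v} : Set V)ᶜ := hav ▸ a.2
        exact absurd (show xf c ∈ ({u, v} : Set V) by rw [hxy]; exact hfy c') hxW
    have hle2 := Nat.card_le_card_of_injective _ hinj
    rw [Nat.card_coe_set_eq, hpair] at hle2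
    have hne2 : Nat.card {c : (G.induce (({u, v} : Set V)ᶜ)).ConnectedComponent //
        Odd (Nat.card c.supp)} ≠ 2 := by
      intro hc2
      apply hnb
      show numOddComponents G {u, v} = ({u, v} : Set V).ncard
      rw [hpair]
      exact hc2
    have h0 : Nat.card {c : (G.induce (({u, v} : Set V)ᶜ)).ConnectedComponent //
        Odd (Nat.card c.supp)} = 0 := by
      rw [Nat.even_iff] at hnum_even
      omega
    have hfinc : Finite ((G.induce (({u, v} : Set V)ᶜ)).ConnectedComponent) := Quot.finite _
    rw [Nat.card_eq_zero] at h0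
    rcases h0 with h0 | h0
    · intro K
      by_contra hK
      exact h0.false ⟨K, Nat.not_even_iff_odd.mp hK⟩
    · exact absurd h0 (not_infinite_iff_finite.mpr inferInstance)
  -- `S` has even cardinality
  have hSeven : Even S.ncard := by
    have hev1 : Even (Nat.card {a : (({u, v} : Set V)ᶜ : Set V) //
        (G.induce (({u, v} : Set V)ᶜ)).connectedComponentMk a ∈ 𝒞}) :=
      even_card_union_components _ 𝒞 (fun c _ => hcompEven c)
    have hcong : Nat.card S = Nat.card {a : (({u, v} : Set V)ᶜ : Set V) //
        (G.induce (({u, v} : Set V)ᶜ)).connectedComponentMk a ∈ 𝒞} := by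
      refine Nat.card_congr ⟨fun x => ⟨⟨x.1, hSW x.2⟩, ?_⟩,
        fun a => ⟨a.1.1, (hSmem a.1.1).mpr ⟨a.1.2, a.2⟩⟩, fun x => Subtype.ext rfl,
        fun a => Subtype.ext (Subtype.ext rfl)⟩
      obtain ⟨hx, hK⟩ := (hSmem x.1).mp x.2
      exact hK
    rw [← Nat.card_coe_set_eq, hcong]
    exact hev1
  -- final assembly
  intro M hM
  obtain ⟨m, hadj, hmem, huniq⟩ := hM.exists_partner
  have huS : u ∉ S := fun h => (hSW h) (Set.mem_insert u {v})
  have hXcard : (S ∪ {u}).ncard = S.ncard + 1 := by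
    rw [Set.union_singleton, Set.ncard_insert_of_notMem huS (Set.toFinite S)]
  have hmod := hM.ncard_cut_mod_two (S ∪ {u})
  have hXodd : (S ∪ {u}).ncard % 2 = 1 := by
    rw [hXcard]
    rw [Nat.even_iff] at hSeven
    omega
  have hsub : M ∩ edgeCut G (S ∪ {u}) ⊆ {s(u, m u), s(v, m v)} := by
    rintro e ⟨heM, -, x, y, rfl, hx, hy⟩
    rcases hx with hxS | hxu
    · have hyu : y ≠ u := fun h => hy (Or.inr h)
      have hyS : y ∉ S := fun h => hy (Or.inl h)
      have hyv : y = v := by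
        by_contra hyv
        have hyB : y ∈ ({u, v} : Set V)ᶜ := by
          simp only [Set.mem_compl_iff, Set.mem_insert_iff, Set.mem_singleton_iff]
          push_neg
          exact ⟨hyu, hyv⟩
        obtain ⟨hxW, hK⟩ := (hSmem x).mp hxS
        have hadjxy : G.Adj x y := (G.mem_edgeSet).mp (hM.1 heM)
        have hmk := mk_eq_of_adj hadjxy hxW hyB
        exact hyS ((hSmem y).mpr ⟨hyB, hmk ▸ hK⟩)
      have he := huniq y s(x, y) heM (Sym2.mem_mk_right x y)
      rw [he, hyv]
      exact Set.mem_insert_of_mem _ rfl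
    · have hxu' : x = u := hxu
      have he := huniq x s(x, y) heM (Sym2.mem_mk_left x y)
      rw [he, hxu']
      exact Set.mem_insert _ _
  have hle : (M ∩ edgeCut G (S ∪ {u})).ncard ≤ 2 := by
    refine le_trans (Set.ncard_le_ncard hsub (Set.toFinite _)) ?_
    refine le_trans (Set.ncard_insert_le _ _) ?_
    rw [Set.ncard_singleton]
  omega
end

section
/- Let v0 be a vertex of degree two in a matching covered graph G of order at least four, with neighbors v1 and v2. Then ∂({v0, v1, v2}) is a tight cut of G. -/
open SimpleGraph

lemma key_stmt17 {V : Type*} (G : SimpleGraph V) (v0 v1 v2 : V)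
    (h01 : v0 ≠ v1) (h02 : v0 ≠ v2) (h12 : v1 ≠ v2) (M : Set (Sym2 V))
    (hM : IsPM G M) (hm : s(v0, v1) ∈ M) :
    (M ∩ edgeCut G {v0, v1, v2}).ncard = 1 := by
  obtain ⟨hMG, hMuniq⟩ := hM
  obtain ⟨e2, ⟨he2M, hv2⟩, huniq2⟩ := hMuniq v2
  obtain ⟨w, he2⟩ : ∃ w, e2 = s(v2, w) := ⟨_, (Sym2.other_spec hv2).symm⟩
  have hadj : G.Adj v2 w := by
    have := hMG he2M; rw [he2] at this; exact this
  have hw2 : w ≠ v2 := hadj.ne'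
  have hw0 : w ≠ v0 := by
    rintro rfl
    obtain ⟨f, -, hf⟩ := hMuniq w
    have h1 := hf (s(w,v1)) ⟨hm, by simp⟩
    have h2 := hf e2 ⟨he2M, by rw [he2]; simp⟩
    rw [he2, ← h1, Sym2.eq_iff] at h2
    tauto
  have hw1 : w ≠ v1 := by
    rintro rfl
    obtain ⟨f, -, hf⟩ := hMuniq w
    have h1 := hf (s(v0,w)) ⟨hm, by simp⟩
    have h2 := hf e2 ⟨he2M, by rw [he2]; simp⟩
    rw [he2, ← h1, Sym2.eq_iff] at h2
    tauto
  have hset : M ∩ edgeCut G {v0, v1, v2} = {e2} := by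
    ext e
    constructor
    · rintro ⟨heM, -, x, y, rfl, hx, hy⟩
      simp only [Set.mem_insert_iff, Set.mem_singleton_iff] at hx hy
      push_neg at hy
      obtain ⟨hy0, hy1, hy2⟩ := hy
      rcases hx with rfl | rfl | rfl
      · obtain ⟨f, -, hf⟩ := hMuniq x
        have h1 := hf (s(x,v1)) ⟨hm, by simp⟩
        have h2 := hf (s(x,y)) ⟨heM, by simp⟩
        rw [← h1, Sym2.eq_iff] at h2
        tauto
      · obtain ⟨f, -, hf⟩ := hMuniq x
        have h1 := hf (s(v0,x)) ⟨hm, by simp⟩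
        have h2 := hf (s(x,y)) ⟨heM, by simp⟩
        rw [← h1, Sym2.eq_iff] at h2
        tauto
      · exact huniq2 (s(x,y)) ⟨heM, by simp⟩
    · rintro rfl
      refine ⟨he2M, hMG he2M, v2, w, he2, by simp, ?_⟩
      simp only [Set.mem_insert_iff, Set.mem_singleton_iff]
      push_neg
      exact ⟨hw0, hw1, hw2⟩
  rw [hset, Set.ncard_singleton]

/-- If `v₀` is a vertex of degree two of a matching covered graph of order at least
four, with neighbours `v₁` and `v₂`, then `∂({v₀, v₁, v₂})` is a tight cut. -/
theorem stmt17 {V : Type*} [Fintype V] (G : SimpleGraph V)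
    (hG : MatchingCovered G) (h4 : 4 ≤ Nat.card V)
    (v0 v1 v2 : V) (h12 : v1 ≠ v2) (hN : G.neighborSet v0 = {v1, v2}) :
    TightCut G {v0, v1, v2} := by
  intro M hM
  have hadj1 : G.Adj v0 v1 := by
    have : v1 ∈ G.neighborSet v0 := by rw [hN]; left; rfl
    exact this
  have hadj2 : G.Adj v0 v2 := by
    have : v2 ∈ G.neighborSet v0 := by rw [hN]; right; rfl
    exact this
  obtain ⟨e0, ⟨he0M, hv0⟩, -⟩ := hM.2 v0
  have he0 : e0 = s(v0, Sym2.Mem.other hv0) := (Sym2.other_spec hv0).symm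
  have hadj : G.Adj v0 (Sym2.Mem.other hv0) := by
    have := hM.1 he0M; rw [he0] at this; exact this
  have hmem : Sym2.Mem.other hv0 ∈ G.neighborSet v0 := hadj
  rw [hN] at hmem
  rcases hmem with h | h
  · rw [h] at he0
    rw [he0] at he0M
    exact key_stmt17 G v0 v1 v2 hadj1.ne hadj2.ne h12 M hM he0M
  · rw [h] at he0
    rw [he0] at he0M
    have hXeq : ({v0, v1, v2} : Set V) = {v0, v2, v1} := by
      ext z; simp only [Set.mem_insert_iff, Set.mem_singleton_iff]; tauto
    rw [hXeq]
    exact key_stmt17 G v0 v2 v1 hadj2.ne hadj1.ne h12.symm M hM he0M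
end

section
/- Let G be a matching covered graph obtained by splicing matching covered graphs G1 at vertex u and G2 at vertex v (with deg(u) = deg(v) and a bijection π between ∂(u) and ∂(v)): G is the union of G1 − u and G2 − v with, for each edge e ∈ ∂(u), an edge joining the end of e in G1 − u to the end of π(e) in G2 − v. Then G is matching covered. -/
open SimpleGraph

/-- The splice of `G₁` at `u` with `G₂` at `v`, with respect to the bijection `π`
between the edges (equivalently, neighbours) at `u` and at `v`: the union of
`G₁ - u` and `G₂ - v`, where for each edge `e` at `u`, the end of `e` in `G₁ - u`
is joined to the end of `π(e)` in `G₂ - v`. -/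
def splice {V₁ V₂ : Type*} (G₁ : SimpleGraph V₁) (G₂ : SimpleGraph V₂)
    (u : V₁) (v : V₂) (π : ↥(G₁.neighborSet u) ≃ ↥(G₂.neighborSet v)) :
    SimpleGraph ({x : V₁ // x ≠ u} ⊕ {y : V₂ // y ≠ v}) where
  Adj a b :=
    match a, b with
    | .inl a, .inl b => G₁.Adj ↑a ↑b
    | .inl a, .inr b => ∃ ha : (↑a : V₁) ∈ G₁.neighborSet u, ↑(π ⟨↑a, ha⟩) = (↑b : V₂)
    | .inr b, .inl a => ∃ ha : (↑a : V₁) ∈ G₁.neighborSet u, ↑(π ⟨↑a, ha⟩) = (↑b : V₂)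
    | .inr a, .inr b => G₂.Adj ↑a ↑b
  symm := by
    refine ⟨?_⟩
    rintro (a | a) (b | b) h
    · exact h.symm
    · exact h
    · exact h
    · exact h.symm
  loopless := by
    refine ⟨?_⟩
    rintro (a | a) h
    · exact G₁.irrefl h
    · exact G₂.irrefl h

lemma pm_partner {V : Type*} {G : SimpleGraph V} {M : Set (Sym2 V)} (h : IsPM G M) (x : V) :
    ∃ y, s(x, y) ∈ M ∧ ∀ z, s(x, z) ∈ M → z = y := by
  obtain ⟨e, ⟨heM, hxe⟩, huniq⟩ := h.2 x
  obtain ⟨y, rfl⟩ := Sym2.mem_iff_exists.mp hxe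
  refine ⟨y, heM, fun z hz => ?_⟩
  exact Sym2.congr_right.mp (huniq s(x, z) ⟨hz, Sym2.mem_mk_left x z⟩)

lemma even_card_invol {V : Type*} [DecidableEq V] (f : V → V) :
    ∀ A : Finset V, (∀ x ∈ A, f x ∈ A) → (∀ x ∈ A, f x ≠ x) → (∀ x ∈ A, f (f x) = x) →
      Even A.card := by
  intro A
  induction A using Finset.strongInduction with
  | _ A ih =>
    intro hmem hne hinv
    rcases A.eq_empty_or_nonempty with rfl | ⟨x, hx⟩
    · simp
    · have hfx : f x ∈ A := hmem x hx
      have hpair : ({x, f x} : Finset V) ⊆ A :=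
        Finset.insert_subset hx (Finset.singleton_subset_iff.mpr hfx)
      have hx_notmem : x ∉ ({f x} : Finset V) := by
        simp only [Finset.mem_singleton]
        exact fun h => hne x hx h.symm
      have h2 : ({x, f x} : Finset V).card = 2 := by
        rw [Finset.card_insert_of_notMem hx_notmem, Finset.card_singleton]
      have hBA : A \ {x, f x} ⊂ A := by
        refine Finset.sdiff_ssubset hpair ?_
        exact ⟨x, Finset.mem_insert_self x _⟩
      have hmemB : ∀ y ∈ A \ {x, f x}, f y ∈ A \ {x, f x} := by
        intro y hy
        obtain ⟨hyA, hy'⟩ := Finset.mem_sdiff.mp hy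
        simp only [Finset.mem_insert, Finset.mem_singleton] at hy'
        push_neg at hy'
        refine Finset.mem_sdiff.mpr ⟨hmem y hyA, ?_⟩
        simp only [Finset.mem_insert, Finset.mem_singleton]
        push_neg
        constructor
        · intro h
          exact hy'.2 (by rw [← h, hinv y hyA])
        · intro h
          apply hy'.1
          have := congrArg f h
          rwa [hinv y hyA, hinv x hx] at this
      have hEvenB := ih _ hBA hmemB
        (fun y hy => hne y (Finset.mem_sdiff.mp hy).1)
        (fun y hy => hinv y (Finset.mem_sdiff.mp hy).1)
      have hcard := Finset.card_sdiff_of_subset hpair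
      have hle := Finset.card_le_card hpair
      obtain ⟨k, hk⟩ := hEvenB
      exact ⟨k + 1, by omega⟩

lemma exists_adj_of_walk {V : Type*} {G : SimpleGraph V} {w : V} (P : V → Prop)
    (hcl : ∀ x y, x ≠ w → y ≠ w → G.Adj x y → P x → P y) :
    ∀ {x z : V}, G.Walk x z → x ≠ w → P x → ¬ P z → ∃ s, s ≠ w ∧ P s ∧ G.Adj w s := by
  intro x z p
  induction p with
  | nil => intro _ hPx hPz; exact absurd hPx hPz
  | @cons x y z h p ih =>
    intro hx hPx hPz
    by_cases hy : y = w
    · exact ⟨x, hx, hPx, by rw [← hy]; exact h.symm⟩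
    · exact ih hy (hcl x y hx hy h hPx) hPz

lemma matchingCovered_delete_connected {V : Type*} [Fintype V] {G : SimpleGraph V}
    (hG : MatchingCovered G) (w : V) :
    (G.comap (Subtype.val : {x : V // x ≠ w} → V)).Connected := by
  classical
  obtain ⟨hconn, hcard, hpm⟩ := hG
  have hV2 : 2 ≤ Fintype.card V := by rwa [← Nat.card_eq_fintype_card]
  obtain ⟨x₀, hx₀⟩ := Fintype.exists_ne_of_one_lt_card (by omega) w
  haveI : Nonempty {x : V // x ≠ w} := ⟨⟨x₀, hx₀⟩⟩
  refine SimpleGraph.Connected.mk ?_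
  intro a b
  by_contra hab
  set H := G.comap (Subtype.val : {x : V // x ≠ w} → V) with hH
  set R : V → Prop := fun x => ∃ h : x ≠ w, H.Reachable ⟨x, h⟩ a with hRdef
  have hRa : R ↑a := ⟨a.2, Reachable.refl _⟩
  have hRb : ¬ R ↑b := by rintro ⟨h, hr⟩; exact hab hr.symm
  have hstep : ∀ x y, x ≠ w → y ≠ w → G.Adj x y → R x → R y := by
    rintro x y hx hy hxy ⟨h, hr⟩
    refine ⟨hy, (Adj.reachable ?_).trans hr⟩
    exact hxy.symm
  have hstep' : ∀ x y, x ≠ w → y ≠ w → G.Adj x y → ¬ R x → ¬ R y :=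
    fun x y hx hy hxy hnx hRy => hnx (hstep y x hy hx hxy.symm hRy)
  obtain ⟨p⟩ := hconn.preconnected ↑b ↑a
  obtain ⟨s, hsw, hsP, hws⟩ :=
    exists_adj_of_walk (fun x => ¬ R x) hstep' p b.2 hRb (not_not_intro hRa)
  obtain ⟨q⟩ := hconn.preconnected ↑a ↑b
  obtain ⟨t, htw, htP, hwt⟩ := exists_adj_of_walk R hstep q a.2 hRa hRb
  obtain ⟨M₁, hM₁, hwsM⟩ := hpm s(w, s) (G.mem_edgeSet.mpr hws)
  obtain ⟨M₂, hM₂, hwtM⟩ := hpm s(w, t) (G.mem_edgeSet.mpr hwt)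
  choose f₁ hf₁ hf₁u using fun x => pm_partner hM₁ x
  choose f₂ hf₂ hf₂u using fun x => pm_partner hM₂ x
  have hf₁w : f₁ w = s := (hf₁u w s hwsM).symm
  have hf₂w : f₂ w = t := (hf₂u w t hwtM).symm
  have hf₁inv : ∀ x, f₁ (f₁ x) = x :=
    fun x => (hf₁u (f₁ x) x (Sym2.eq_swap ▸ hf₁ x)).symm
  have hf₂inv : ∀ x, f₂ (f₂ x) = x :=
    fun x => (hf₂u (f₂ x) x (Sym2.eq_swap ▸ hf₂ x)).symm
  have hadj₁ : ∀ x, G.Adj x (f₁ x) := fun x => G.mem_edgeSet.mp (hM₁.1 (hf₁ x))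
  have hadj₂ : ∀ x, G.Adj x (f₂ x) := fun x => G.mem_edgeSet.mp (hM₂.1 (hf₂ x))
  have hf₁ne : ∀ x, f₁ x ≠ x := fun x h => (G.ne_of_adj (hadj₁ x)) h.symm
  have hf₂ne : ∀ x, f₂ x ≠ x := fun x h => (G.ne_of_adj (hadj₂ x)) h.symm
  set Sf : Finset V := Finset.univ.filter (fun x => x ≠ w ∧ ¬ R x) with hSf
  have hmemS : ∀ x, x ∈ Sf ↔ x ≠ w ∧ ¬ R x := by
    intro x; simp [hSf]
  -- |Sf| is even, via f₂ (w is matched to t ∉ S)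
  have hS2 : ∀ x ∈ Sf, f₂ x ∈ Sf := by
    intro x hxS
    obtain ⟨hxw, hxR⟩ := (hmemS x).mp hxS
    have hfxw : f₂ x ≠ w := by
      intro h
      have : x = t := by rw [← hf₂w, ← h, hf₂inv]
      exact hxR (this ▸ htP)
    exact (hmemS _).mpr ⟨hfxw, hstep' x (f₂ x) hxw hfxw (hadj₂ x) hxR⟩
  have hEvenS : Even Sf.card :=
    even_card_invol f₂ Sf hS2 (fun x _ => hf₂ne x) (fun x _ => hf₂inv x)
  -- |Sf \ {s}| is even, via f₁ (w is matched to s)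
  have hsS : s ∈ Sf := (hmemS s).mpr ⟨hsw, hsP⟩
  have hS1 : ∀ x ∈ Sf.erase s, f₁ x ∈ Sf.erase s := by
    intro x hx
    obtain ⟨hxs, hxS⟩ := Finset.mem_erase.mp hx
    obtain ⟨hxw, hxR⟩ := (hmemS x).mp hxS
    have hfxw : f₁ x ≠ w := by
      intro h
      exact hxs (by rw [← hf₁w, ← h, hf₁inv])
    have hfxs : f₁ x ≠ s := by
      intro h
      apply hxw
      rw [← hf₁inv x, h, ← hf₁w, hf₁inv]
    exact Finset.mem_erase.mpr
      ⟨hfxs, (hmemS _).mpr ⟨hfxw, hstep' x (f₁ x) hxw hfxw (hadj₁ x) hxR⟩⟩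
  have hEvenS' : Even (Sf.erase s).card :=
    even_card_invol f₁ _ hS1 (fun x _ => hf₁ne x) (fun x _ => hf₁inv x)
  have hcard' : (Sf.erase s).card = Sf.card - 1 := Finset.card_erase_of_mem hsS
  have hpos : 1 ≤ Sf.card := Finset.card_pos.mpr ⟨s, hsS⟩
  obtain ⟨k, hk⟩ := hEvenS
  obtain ⟨m, hm⟩ := hEvenS'
  omega

def sRel {V₁ V₂ : Type*} (u : V₁) (v : V₂) (M₁ : Set (Sym2 V₁)) (M₂ : Set (Sym2 V₂))
    (c : V₁) (d : V₂) :
    ({x : V₁ // x ≠ u} ⊕ {y : V₂ // y ≠ v}) → ({x : V₁ // x ≠ u} ⊕ {y : V₂ // y ≠ v}) → Prop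
  | .inl a, .inl b => s((a : V₁), (b : V₁)) ∈ M₁
  | .inl a, .inr b => (a : V₁) = c ∧ (b : V₂) = d
  | .inr a, .inl b => (b : V₁) = c ∧ (a : V₂) = d
  | .inr a, .inr b => s((a : V₂), (b : V₂)) ∈ M₂

lemma sRel_symm {V₁ V₂ : Type*} (u : V₁) (v : V₂) (M₁ : Set (Sym2 V₁)) (M₂ : Set (Sym2 V₂))
    (c : V₁) (d : V₂) : Symmetric (sRel u v M₁ M₂ c d) := by
  rintro (a | a) (b | b) h
  · show s((b : V₁), (a : V₁)) ∈ M₁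
    rw [Sym2.eq_swap]; exact h
  · exact h
  · exact h
  · show s((b : V₂), (a : V₂)) ∈ M₂
    rw [Sym2.eq_swap]; exact h

lemma existsUnique_edge {α : Type*} {r : α → α → Prop} (hs : Symmetric r) (x y : α)
    (hxy : r x y) (huniq : ∀ z, r x z → z = y) :
    ∃! e, e ∈ Sym2.fromRel (r := r) ⟨by intro a b h; exact hs h⟩ ∧ x ∈ e := by
  refine ⟨s(x, y), ⟨Sym2.fromRel_prop.mpr hxy, Sym2.mem_mk_left x y⟩, ?_⟩
  rintro e ⟨heM, hxe⟩
  obtain ⟨z, rfl⟩ := Sym2.mem_iff_exists.mp hxe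
  rw [huniq z (Sym2.fromRel_prop.mp heM)]

lemma isPM_spliceM {V₁ V₂ : Type*} (G₁ : SimpleGraph V₁) (G₂ : SimpleGraph V₂)
    (u : V₁) (v : V₂) (π : ↥(G₁.neighborSet u) ≃ ↥(G₂.neighborSet v))
    {M₁ : Set (Sym2 V₁)} {M₂ : Set (Sym2 V₂)} (hM₁ : IsPM G₁ M₁) (hM₂ : IsPM G₂ M₂)
    (c : V₁) (hc : c ∈ G₁.neighborSet u) (hcM : s(u, c) ∈ M₁)
    (hdM : s(v, ↑(π ⟨c, hc⟩)) ∈ M₂) :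
    IsPM (splice G₁ G₂ u v π)
      (Sym2.fromRel (r := sRel u v M₁ M₂ c ↑(π ⟨c, hc⟩))
        ⟨by intro a b h; exact sRel_symm u v M₁ M₂ c ↑(π ⟨c, hc⟩) h⟩) := by
  set d : V₂ := ↑(π ⟨c, hc⟩) with hddef
  have hd : d ∈ G₂.neighborSet v := (π ⟨c, hc⟩).2
  have hdv : d ≠ v := (G₂.ne_of_adj hd).symm
  have hcu : c ≠ u := (G₁.ne_of_adj hc).symm
  constructor
  · intro e
    induction e using Sym2.ind with
    | _ x y =>
      intro he
      rw [SimpleGraph.mem_edgeSet]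
      have h := Sym2.fromRel_prop.mp he
      match x, y with
      | .inl a, .inl b => exact G₁.mem_edgeSet.mp (hM₁.1 h)
      | .inl a, .inr b =>
        obtain ⟨h1, h2⟩ := h
        refine ⟨h1 ▸ hc, ?_⟩
        rw [h2, hddef]
        exact congrArg Subtype.val (congrArg π (Subtype.ext h1))
      | .inr a, .inl b =>
        obtain ⟨h1, h2⟩ := h
        refine ⟨h1 ▸ hc, ?_⟩
        rw [h2, hddef]
        exact congrArg Subtype.val (congrArg π (Subtype.ext h1))
      | .inr a, .inr b => exact G₂.mem_edgeSet.mp (hM₂.1 h)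
  · rintro (a | a)
    · by_cases hac : (a : V₁) = c
      · refine existsUnique_edge (sRel_symm u v M₁ M₂ c d) (Sum.inl a) (Sum.inr ⟨d, hdv⟩) ⟨hac, rfl⟩ ?_
        rintro (b' | b') hb'
        · exfalso
          obtain ⟨y₀, hy₀, hy₀u⟩ := pm_partner hM₁ c
          have h1 : u = y₀ := hy₀u u (Sym2.eq_swap ▸ hcM)
          have h2 : (b' : V₁) = y₀ := hy₀u _ (hac ▸ hb')
          exact b'.2 (by rw [h2, ← h1])
        · exact congrArg Sum.inr (Subtype.ext hb'.2)
      · obtain ⟨y₀, hy₀, hy₀u⟩ := pm_partner hM₁ (a : V₁)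
        have hy₀ne : y₀ ≠ u := by
          rintro rfl
          obtain ⟨z₀, hz₀, hz₀u⟩ := pm_partner hM₁ y₀
          have hcz : c = z₀ := hz₀u c hcM
          have haz : (a : V₁) = z₀ := hz₀u _ (Sym2.eq_swap ▸ hy₀)
          exact hac (haz.trans hcz.symm)
        refine existsUnique_edge (sRel_symm u v M₁ M₂ c d) (Sum.inl a) (Sum.inl ⟨y₀, hy₀ne⟩) hy₀ ?_
        rintro (b' | b') hb'
        · exact congrArg Sum.inl (Subtype.ext (hy₀u _ hb'))
        · exact absurd hb'.1 hac
    · by_cases had : (a : V₂) = d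
      · refine existsUnique_edge (sRel_symm u v M₁ M₂ c d) (Sum.inr a) (Sum.inl ⟨c, hcu⟩) ⟨rfl, had⟩ ?_
        rintro (b' | b') hb'
        · exact congrArg Sum.inl (Subtype.ext hb'.1)
        · exfalso
          obtain ⟨y₀, hy₀, hy₀u⟩ := pm_partner hM₂ d
          have h1 : v = y₀ := hy₀u v (Sym2.eq_swap ▸ hdM)
          have h2 : (b' : V₂) = y₀ := hy₀u _ (had ▸ hb')
          exact b'.2 (by rw [h2, ← h1])
      · obtain ⟨y₀, hy₀, hy₀u⟩ := pm_partner hM₂ (a : V₂)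
        have hy₀ne : y₀ ≠ v := by
          rintro rfl
          obtain ⟨z₀, hz₀, hz₀u⟩ := pm_partner hM₂ y₀
          have hdz : d = z₀ := hz₀u d hdM
          have haz : (a : V₂) = z₀ := hz₀u _ (Sym2.eq_swap ▸ hy₀)
          exact had (haz.trans hdz.symm)
        refine existsUnique_edge (sRel_symm u v M₁ M₂ c d) (Sum.inr a) (Sum.inr ⟨y₀, hy₀ne⟩) hy₀ ?_
        rintro (b' | b') hb'
        · exact absurd hb'.2 had
        · exact congrArg Sum.inr (Subtype.ext (hy₀u _ hb'))

lemma exists_adj_of_connected {V : Type*} [Fintype V] {G : SimpleGraph V}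
    (h : G.Connected) (hcard : 2 ≤ Nat.card V) (u : V) : ∃ y, G.Adj u y := by
  have hV2 : 2 ≤ Fintype.card V := by rwa [← Nat.card_eq_fintype_card]
  obtain ⟨x, hx⟩ := Fintype.exists_ne_of_one_lt_card (by omega) u
  obtain ⟨p⟩ := h.preconnected u x
  cases p with
  | nil => exact absurd rfl hx
  | cons h' _ => exact ⟨_, h'⟩

/-- The splice of two matching covered graphs is matching covered. -/
theorem stmt19 {V₁ V₂ : Type*} [Fintype V₁] [Fintype V₂] [DecidableEq V₁]
    [DecidableEq V₂] (G₁ : SimpleGraph V₁) (G₂ : SimpleGraph V₂)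
    (u : V₁) (v : V₂) (π : ↥(G₁.neighborSet u) ≃ ↥(G₂.neighborSet v))
    (hG₁ : MatchingCovered G₁) (hG₂ : MatchingCovered G₂) :
    MatchingCovered (splice G₁ G₂ u v π) := by
  classical
  obtain ⟨y₁, hy₁⟩ := exists_adj_of_connected hG₁.1 hG₁.2.1 u
  have hy₁N : y₁ ∈ G₁.neighborSet u := hy₁
  have hy₁u : y₁ ≠ u := (G₁.ne_of_adj hy₁).symm
  have hπ₁ : (↑(π ⟨y₁, hy₁N⟩) : V₂) ∈ G₂.neighborSet v := (π ⟨y₁, hy₁N⟩).2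
  have hπ₁v : (↑(π ⟨y₁, hy₁N⟩) : V₂) ≠ v := (G₂.ne_of_adj hπ₁).symm
  have hH₁ := matchingCovered_delete_connected hG₁ u
  have hH₂ := matchingCovered_delete_connected hG₂ v
  let f₁ : (G₁.comap (Subtype.val : {x : V₁ // x ≠ u} → V₁)) →g splice G₁ G₂ u v π :=
    ⟨Sum.inl, fun {a b} h => h⟩
  let f₂ : (G₂.comap (Subtype.val : {y : V₂ // y ≠ v} → V₂)) →g splice G₁ G₂ u v π :=
    ⟨Sum.inr, fun {a b} h => h⟩
  have hcross : (splice G₁ G₂ u v π).Reachable (Sum.inl ⟨y₁, hy₁u⟩)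
      (Sum.inr ⟨↑(π ⟨y₁, hy₁N⟩), hπ₁v⟩) := Adj.reachable ⟨hy₁N, rfl⟩
  refine ⟨?_, ?_, ?_⟩
  · haveI : Nonempty ({x : V₁ // x ≠ u} ⊕ {y : V₂ // y ≠ v}) := ⟨Sum.inl ⟨y₁, hy₁u⟩⟩
    refine SimpleGraph.Connected.mk ?_
    rintro (a | a) (b | b)
    · exact Reachable.map f₁ (hH₁.preconnected a b)
    · exact (Reachable.map f₁ (hH₁.preconnected a ⟨y₁, hy₁u⟩)).trans
        (hcross.trans (Reachable.map f₂ (hH₂.preconnected _ b)))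
    · exact ((Reachable.map f₁ (hH₁.preconnected b ⟨y₁, hy₁u⟩)).trans
        (hcross.trans (Reachable.map f₂ (hH₂.preconnected _ a)))).symm
    · exact Reachable.map f₂ (hH₂.preconnected a b)
  · haveI h1 : Nonempty {x : V₁ // x ≠ u} := ⟨⟨y₁, hy₁u⟩⟩
    haveI h2 : Nonempty {y : V₂ // y ≠ v} := ⟨⟨↑(π ⟨y₁, hy₁N⟩), hπ₁v⟩⟩
    have c1 : 0 < Nat.card {x : V₁ // x ≠ u} := Nat.card_pos
    have c2 : 0 < Nat.card {y : V₂ // y ≠ v} := Nat.card_pos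
    have := Nat.card_sum (α := {x : V₁ // x ≠ u}) (β := {y : V₂ // y ≠ v})
    omega
  · intro e
    induction e using Sym2.ind with
    | _ x y =>
      intro he
      have hadj := (splice G₁ G₂ u v π).mem_edgeSet.mp he
      match x, y with
      | .inl a, .inl b =>
        have hab : G₁.Adj ↑a ↑b := hadj
        obtain ⟨M₁, hM₁, heM₁⟩ := hG₁.2.2 s(↑a, ↑b) (G₁.mem_edgeSet.mpr hab)
        obtain ⟨c₀, hc₀, hc₀u⟩ := pm_partner hM₁ u
        have hc₀N : c₀ ∈ G₁.neighborSet u := G₁.mem_edgeSet.mp (hM₁.1 hc₀)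
        have hd₀ := (π ⟨c₀, hc₀N⟩).2
        obtain ⟨M₂, hM₂, heM₂⟩ :=
          hG₂.2.2 s(v, ↑(π ⟨c₀, hc₀N⟩)) (G₂.mem_edgeSet.mpr hd₀)
        exact ⟨_, isPM_spliceM G₁ G₂ u v π hM₁ hM₂ c₀ hc₀N hc₀ heM₂,
          Sym2.fromRel_prop.mpr heM₁⟩
      | .inl a, .inr b =>
        obtain ⟨ha, hb⟩ := hadj
        obtain ⟨M₁, hM₁, heM₁⟩ := hG₁.2.2 s(u, ↑a) (G₁.mem_edgeSet.mpr ha)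
        have hd₀ := (π ⟨↑a, ha⟩).2
        obtain ⟨M₂, hM₂, heM₂⟩ :=
          hG₂.2.2 s(v, ↑(π ⟨↑a, ha⟩)) (G₂.mem_edgeSet.mpr hd₀)
        exact ⟨_, isPM_spliceM G₁ G₂ u v π hM₁ hM₂ ↑a ha heM₁ heM₂,
          Sym2.fromRel_prop.mpr ⟨rfl, hb.symm⟩⟩
      | .inr a, .inl b =>
        obtain ⟨hb', ha'⟩ := hadj
        obtain ⟨M₁, hM₁, heM₁⟩ := hG₁.2.2 s(u, ↑b) (G₁.mem_edgeSet.mpr hb')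
        have hd₀ := (π ⟨↑b, hb'⟩).2
        obtain ⟨M₂, hM₂, heM₂⟩ :=
          hG₂.2.2 s(v, ↑(π ⟨↑b, hb'⟩)) (G₂.mem_edgeSet.mpr hd₀)
        exact ⟨_, isPM_spliceM G₁ G₂ u v π hM₁ hM₂ ↑b hb' heM₁ heM₂,
          Sym2.fromRel_prop.mpr ⟨rfl, ha'.symm⟩⟩
      | .inr a, .inr b =>
        have hab : G₂.Adj ↑a ↑b := hadj
        obtain ⟨M₂, hM₂, heM₂⟩ := hG₂.2.2 s(↑a, ↑b) (G₂.mem_edgeSet.mpr hab)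
        obtain ⟨d₀, hd₀, hd₀u⟩ := pm_partner hM₂ v
        have hd₀N : d₀ ∈ G₂.neighborSet v := G₂.mem_edgeSet.mp (hM₂.1 hd₀)
        have hc₀N : (↑(π.symm ⟨d₀, hd₀N⟩) : V₁) ∈ G₁.neighborSet u := (π.symm ⟨d₀, hd₀N⟩).2
        obtain ⟨M₁, hM₁, heM₁⟩ :=
          hG₁.2.2 s(u, ↑(π.symm ⟨d₀, hd₀N⟩)) (G₁.mem_edgeSet.mpr hc₀N)
        have hππ : π ⟨↑(π.symm ⟨d₀, hd₀N⟩), hc₀N⟩ = ⟨d₀, hd₀N⟩ := π.apply_symm_apply _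
        refine ⟨_, isPM_spliceM G₁ G₂ u v π hM₁ hM₂ _ hc₀N heM₁ ?_,
          Sym2.fromRel_prop.mpr heM₂⟩
        rw [hππ]
        exact hd₀
end
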